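/- arXiv:2603.24794 — 7 statements merged into one kernel-verified Lean document; each statement's English description precedes it below -/
import Mathlib

section
/- Let L be a Lie algebra over a field of characteristic zero and let a, b, c, d be elements of L satisfying [a,b] = c and [a,c] = d, with all other brackets among a, b, c, d equal to 0. Then for all nonnegative integers t and u, in the universal enveloping algebra U(L) one has a^t b^u = \sum_{k_1, k_2 \ge 0,\ k_1+k_2 \le u,\ k_1+2k_2 \le t} \binom{u}{k_1+k_2} \binom{t}{k_1+2k_2} \binom{k_1+k_2}{k_1} \frac{(k_1+2k_2)!}{2^{k_2}} \, d^{k_2} c^{k_1} b^{u-k_1-k_2} a^{t-k_1-2k_2}. -/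
open UniversalEnvelopingAlgebra

noncomputable def gco (K : Type*) [Field K] (u t k1 k2 : ℕ) : K :=
  ((u.choose (k1 + k2) * t.choose (k1 + 2 * k2) * (k1 + k2).choose k1
      * (k1 + 2 * k2).factorial : ℕ) : K) / 2 ^ k2

lemma gco_zero_left {K : Type*} [Field K] {u t k1 k2 : ℕ} (h : u < k1 + k2) :
    gco K u t k1 k2 = 0 := by
  unfold gco; rw [Nat.choose_eq_zero_of_lt h]; simp

lemma gco_zero_right {K : Type*} [Field K] {u t k1 k2 : ℕ} (h : t < k1 + 2 * k2) :
    gco K u t k1 k2 = 0 := by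
  unfold gco; rw [Nat.choose_eq_zero_of_lt h]; simp

lemma sum_shift {M : Type*} [AddCommMonoid M] (f : ℕ → M) (n : ℕ)
    (h0 : f 0 = 0) (hn : f (n + 1) = 0) :
    ∑ k ∈ Finset.range (n + 1), f (k + 1) = ∑ k ∈ Finset.range (n + 1), f k := by
  have h1 := Finset.sum_range_succ' f (n + 1)
  have h2 := Finset.sum_range_succ f (n + 1)
  rw [h0, add_zero] at h1
  rw [hn, add_zero] at h2
  rw [← h1, h2]

lemma gco_rec {K : Type*} [Field K] [CharZero K] (u t k1 k2 : ℕ) :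
    gco K u (t + 1) k1 k2 = gco K u t k1 k2
      + (if 1 ≤ k1 then ((u - (k1 - 1) - k2 : ℕ) : K) * gco K u t (k1 - 1) k2 else 0)
      + (if 1 ≤ k2 then ((k1 + 1 : ℕ) : K) * gco K u t (k1 + 1) (k2 - 1) else 0) := by
  rcases k1 with _ | p <;> rcases k2 with _ | q
  · unfold gco; norm_num
  · rw [if_neg (by omega), if_pos (by omega)]
    simp only [Nat.add_sub_cancel, Nat.succ_sub_one, Nat.zero_sub, Nat.sub_zero, add_zero]
    unfold gco
    simp only [show (0:ℕ)+(q+1) = q+1 by omega, show (0:ℕ)+2*(q+1) = 2*q+2 by omega,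
      show (0:ℕ)+1+q = q+1 by omega, show (0:ℕ)+1+2*q = 2*q+1 by omega,
      show 2*(q+1) = 2*q+2 by omega, Nat.choose_zero_right, Nat.choose_one_right]
    have pasK : (((t+1).choose (2*q+2) : ℕ) : K)
        = ((t.choose (2*q+1) : ℕ) : K) + ((t.choose (2*q+2) : ℕ) : K) := by
      exact_mod_cast congrArg (Nat.cast (R := K)) (Nat.choose_succ_succ t (2*q+1))
    have facK : (((2*q+2).factorial : ℕ) : K) = (2*(q:K)+2) * (((2*q+1).factorial : ℕ) : K) := by
      rw [show 2*q+2 = (2*q+1)+1 by omega, Nat.factorial_succ]; push_cast; ring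
    field_simp
    simp only [zero_add]
    push_cast [Nat.choose_one_right]
    rw [pasK, facK]
    ring
  · rw [if_pos (by omega), if_neg (by omega)]
    simp only [Nat.add_sub_cancel, Nat.succ_sub_one, Nat.sub_zero, add_zero]
    unfold gco
    simp only [show p+1+0 = p+1 by omega, show p+1+2*0 = p+1 by omega,
      show p+0 = p by omega, show p+2*0 = p by omega, Nat.sub_zero,
      Nat.choose_self, pow_zero, div_one]
    have pasK : (((t+1).choose (p+1) : ℕ) : K)
        = ((t.choose p : ℕ) : K) + ((t.choose (p+1) : ℕ) : K) := by
      exact_mod_cast congrArg (Nat.cast (R := K)) (Nat.choose_succ_succ t p)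
    have facK : (((p+1).factorial : ℕ) : K) = ((p:K)+1) * ((p.factorial : ℕ) : K) := by
      rw [Nat.factorial_succ]; push_cast; ring
    have chA : ((u.choose (p+1) : ℕ) : K) * ((p:K)+1)
        = ((u.choose p : ℕ) : K) * ((u - p : ℕ) : K) := by
      exact_mod_cast congrArg (Nat.cast (R := K)) (Nat.choose_succ_right_eq u p)
    push_cast
    linear_combination
        (((u.choose (p+1) : ℕ) : K) * (((p+1).factorial : ℕ) : K)) * pasK
      + (((u.choose (p+1) : ℕ) : K) * ((t.choose p : ℕ) : K)) * facK
      + (((t.choose p : ℕ) : K) * ((p.factorial : ℕ) : K)) * chA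
  · rw [if_pos (by omega), if_pos (by omega)]
    simp only [Nat.add_sub_cancel, Nat.succ_sub_one]
    unfold gco
    simp only [show p+1+(q+1) = p+q+2 by omega, show p+1+2*(q+1) = p+2*q+3 by omega,
      show p+(q+1) = p+q+1 by omega, show p+2*(q+1) = p+2*q+2 by omega,
      show p+1+1+q = p+q+2 by omega, show p+1+1+2*q = p+2*q+2 by omega,
      show p+1+1 = p+2 by omega, show ∀ x:ℕ, u - x - (q+1) = u - (x+q+1) by omega]
    have pasK : (((t+1).choose (p+2*q+3) : ℕ) : K)
        = ((t.choose (p+2*q+2) : ℕ) : K) + ((t.choose (p+2*q+3) : ℕ) : K) := by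
      have := Nat.choose_succ_succ t (p+2*q+2)
      exact_mod_cast congrArg (Nat.cast (R := K)) this
    have facK : (((p+2*q+3).factorial : ℕ) : K)
        = ((p:K)+2*q+3) * (((p+2*q+2).factorial : ℕ) : K) := by
      rw [show p+2*q+3 = (p+2*q+2)+1 by omega, Nat.factorial_succ]; push_cast; ring
    have chA : ((u.choose (p+q+2) : ℕ) : K) * ((p:K)+q+2)
        = ((u.choose (p+q+1) : ℕ) : K) * ((u - (p+q+1) : ℕ) : K) := by
      exact_mod_cast congrArg (Nat.cast (R := K)) (Nat.choose_succ_right_eq u (p+q+1))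
    have chB : ((p:K)+q+2) * (((p+q+1).choose p : ℕ) : K)
        = (((p+q+2).choose (p+1) : ℕ) : K) * ((p:K)+1) := by
      exact_mod_cast congrArg (Nat.cast (R := K)) (Nat.add_one_mul_choose_eq (p+q+1) p)
    have chC : (((p+q+2).choose (p+2) : ℕ) : K) * ((p:K)+2)
        = (((p+q+2).choose (p+1) : ℕ) : K) * ((q:K)+1) := by
      have := Nat.choose_succ_right_eq (p+q+2) (p+1)
      rw [show p+q+2-(p+1) = q+1 by omega] at this
      exact_mod_cast congrArg (Nat.cast (R := K)) this
    field_simp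
    push_cast
    linear_combination ((2:K)^q) * (
        (((u.choose (p+q+2) : ℕ) : K) * (((p+q+2).choose (p+1) : ℕ) : K) * (((p+2*q+3).factorial : ℕ) : K)) * pasK
      + (((u.choose (p+q+2) : ℕ) : K) * ((t.choose (p+2*q+2) : ℕ) : K) * (((p+q+2).choose (p+1) : ℕ) : K)) * facK
      + (((t.choose (p+2*q+2) : ℕ) : K) * (((p+q+1).choose p : ℕ) : K) * (((p+2*q+2).factorial : ℕ) : K)) * chA
      - (((u.choose (p+q+2) : ℕ) : K) * ((t.choose (p+2*q+2) : ℕ) : K) * (((p+2*q+2).factorial : ℕ) : K)) * chB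
      - 2*(((u.choose (p+q+2) : ℕ) : K) * ((t.choose (p+2*q+2) : ℕ) : K) * (((p+2*q+2).factorial : ℕ) : K)) * chC)

lemma ABpow {R : Type*} [Ring R] (A B C : R) (h : A * B = B * A + C) (hc : B * C = C * B) :
    ∀ v : ℕ, A * B ^ v = B ^ v * A + v • (C * B ^ (v - 1)) := by
  intro v
  induction v with
  | zero => simp
  | succ w ih =>
    rw [pow_succ', ← mul_assoc, h, add_mul, mul_assoc, ih, mul_add]
    rcases w with _ | x
    · simp [pow_succ']
    · rw [mul_smul_comm, ← mul_assoc B C, hc, Nat.add_sub_cancel, mul_assoc C B,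
        ← pow_succ', ← mul_assoc, ← pow_succ', Nat.add_sub_cancel, succ_nsmul]
      simp only [add_nsmul, one_nsmul]
      abel

lemma expand_lemma {R : Type*} [Ring R] (A B C D : R)
    (hB : ∀ v : ℕ, A * B ^ v = B ^ v * A + v • (C * B ^ (v - 1)))
    (hC : ∀ v : ℕ, A * C ^ v = C ^ v * A + v • (D * C ^ (v - 1)))
    (hAD : Commute A D) (k1 k2 v s : ℕ) :
    A * (D ^ k2 * C ^ k1 * B ^ v * A ^ s)
      = D ^ k2 * C ^ k1 * B ^ v * A ^ (s + 1)
        + v • (D ^ k2 * C ^ (k1 + 1) * B ^ (v - 1) * A ^ s)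
        + k1 • (D ^ (k2 + 1) * C ^ (k1 - 1) * B ^ v * A ^ s) := by
  have e1 : A * (B ^ v * A ^ s) = B ^ v * A ^ (s + 1) + v • (C * (B ^ (v - 1) * A ^ s)) := by
    rw [← mul_assoc, hB v, add_mul, smul_mul_assoc, mul_assoc, ← pow_succ', mul_assoc]
  have e2 : A * (C ^ k1 * (B ^ v * A ^ s))
      = C ^ k1 * (B ^ v * A ^ (s + 1)) + v • (C ^ (k1 + 1) * (B ^ (v - 1) * A ^ s))
        + k1 • (D * (C ^ (k1 - 1) * (B ^ v * A ^ s))) := by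
    rw [← mul_assoc, hC k1, add_mul, smul_mul_assoc, mul_assoc, e1, mul_add, mul_smul_comm,
      ← mul_assoc (C ^ k1) C, ← pow_succ, mul_assoc D]
  simp only [mul_assoc]
  rw [← mul_assoc A, hAD.pow_right k2, mul_assoc, e2, mul_add, mul_add, mul_smul_comm,
    mul_smul_comm, ← mul_assoc (D ^ k2) D, ← pow_succ]


attribute [local instance 100] LieRing.ofAssociativeRing

theorem stmt_2 {K : Type*} [Field K] [CharZero K]
    {L : Type*} [LieRing L] [LieAlgebra K L]
    (a b c d : L)
    (hab : ⁅a, b⁆ = c) (hac : ⁅a, c⁆ = d) (had : ⁅a, d⁆ = 0) (hbc : ⁅b, c⁆ = 0) (hbd : ⁅b, d⁆ = 0) (hcd : ⁅c, d⁆ = 0)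
    (t u : ℕ) :
    (ι K a : UniversalEnvelopingAlgebra K L) ^ (t) * (ι K b : UniversalEnvelopingAlgebra K L) ^ (u) =
      ∑ k1 ∈ Finset.range (u + 1), ∑ k2 ∈ Finset.range (u + 1),
        if k1 + k2 ≤ u ∧ k1 + 2 * k2 ≤ t then
          (((u.choose (k1 + k2) * t.choose (k1 + 2 * k2) * (k1 + k2).choose k1
              * (k1 + 2 * k2).factorial : ℕ) : K) / 2 ^ k2) •
            ((ι K d : UniversalEnvelopingAlgebra K L) ^ (k2) * (ι K c : UniversalEnvelopingAlgebra K L) ^ (k1) * (ι K b : UniversalEnvelopingAlgebra K L) ^ (u - k1 - k2) * (ι K a : UniversalEnvelopingAlgebra K L) ^ (t - k1 - 2 * k2))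
        else 0 := by
  classical
  set A : UniversalEnvelopingAlgebra K L := ι K a with hA
  set B : UniversalEnvelopingAlgebra K L := ι K b with hB'
  set C : UniversalEnvelopingAlgebra K L := ι K c with hC'
  set D : UniversalEnvelopingAlgebra K L := ι K d with hD'
  have hsw : ∀ (n : ℕ) (g : K) (x : UniversalEnvelopingAlgebra K L),
      ((n : K) * g) • x = n • (g • x) := by
    intro n g x
    rw [mul_smul, Nat.cast_smul_eq_nsmul]
  have hsw2 : ∀ (n : ℕ) (g : K) (x : UniversalEnvelopingAlgebra K L),
      g • (n • x) = n • (g • x) := fun n g x => smul_comm g n x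
  have hAB : A * B = B * A + C := by
    have h := (ι K (L := L)).map_lie a b
    rw [hab, Ring.lie_def] at h
    rw [eq_sub_iff_add_eq] at h
    rw [hA, hB', hC', ← h, add_comm]
  have hAC : A * C = C * A + D := by
    have h := (ι K (L := L)).map_lie a c
    rw [hac, Ring.lie_def] at h
    rw [eq_sub_iff_add_eq] at h
    rw [hA, hC', hD', ← h, add_comm]
  have hADc : Commute A D := by
    have h := (ι K (L := L)).map_lie a d
    rw [had, Ring.lie_def, map_zero] at h
    rw [hA, hD']
    exact sub_eq_zero.mp h.symm
  have hBCc : B * C = C * B := by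
    have h := (ι K (L := L)).map_lie b c
    rw [hbc, Ring.lie_def, map_zero] at h
    rw [hB', hC']
    exact sub_eq_zero.mp h.symm
  have hCDc : C * D = D * C := by
    have h := (ι K (L := L)).map_lie c d
    rw [hcd, Ring.lie_def, map_zero] at h
    rw [hC', hD']
    exact sub_eq_zero.mp h.symm
  have hBexp := ABpow A B C hAB hBCc
  have hCexp := ABpow A C D hAC hCDc
  set T : ℕ → ℕ → ℕ → UniversalEnvelopingAlgebra K L :=
    fun s k1 k2 => D ^ k2 * C ^ k1 * B ^ (u - k1 - k2) * A ^ (s - k1 - 2 * k2) with hT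
  suffices main : ∀ s, A ^ s * B ^ u
      = ∑ k1 ∈ Finset.range (u + 1), ∑ k2 ∈ Finset.range (u + 1),
          gco K u s k1 k2 • T s k1 k2 by
    rw [main t]
    refine Finset.sum_congr rfl fun k1 _ => Finset.sum_congr rfl fun k2 _ => ?_
    by_cases hcnd : k1 + k2 ≤ u ∧ k1 + 2 * k2 ≤ t
    · rw [if_pos hcnd]; rfl
    · rw [if_neg hcnd]
      rcases not_and_or.mp hcnd with h | h
      · rw [gco_zero_left (by omega), zero_smul]
      · rw [gco_zero_right (by omega), zero_smul]
  intro s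
  induction s with
  | zero =>
    rw [pow_zero, one_mul,
      Finset.sum_eq_single_of_mem 0 (Finset.mem_range.mpr (by omega))
        (fun k1 _ hk1 => Finset.sum_eq_zero fun k2 _ => by
          rw [gco_zero_right (by omega), zero_smul]),
      Finset.sum_eq_single_of_mem 0 (Finset.mem_range.mpr (by omega))
        (fun k2 _ hk2 => by rw [gco_zero_right (by omega), zero_smul])]
    simp [hT, gco]
  | succ s ih =>
    have key : ∀ k1 k2 : ℕ, gco K u s k1 k2 • (A * T s k1 k2)
        = gco K u s k1 k2 • T (s + 1) k1 k2
          + (((u - k1 - k2 : ℕ) : K) * gco K u s k1 k2) • T (s + 1) (k1 + 1) k2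
          + (((k1 : ℕ) : K) * gco K u s k1 k2) • T (s + 1) (k1 - 1) (k2 + 1) := by
      intro k1 k2
      by_cases hcnd : k1 + 2 * k2 ≤ s
      case neg =>
        rw [gco_zero_right (by omega)]
        simp
      case pos =>
        have hexp := expand_lemma A B C D hBexp hCexp hADc k1 k2 (u - k1 - k2) (s - k1 - 2 * k2)
        have t1 : T (s + 1) k1 k2
            = D ^ k2 * C ^ k1 * B ^ (u - k1 - k2) * A ^ ((s - k1 - 2 * k2) + 1) := by
          simp only [hT]
          rw [show s + 1 - k1 - 2 * k2 = (s - k1 - 2 * k2) + 1 by omega]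
        have t2 : T (s + 1) (k1 + 1) k2
            = D ^ k2 * C ^ (k1 + 1) * B ^ ((u - k1 - k2) - 1) * A ^ (s - k1 - 2 * k2) := by
          simp only [hT]
          rw [show u - (k1 + 1) - k2 = (u - k1 - k2) - 1 by omega,
            show s + 1 - (k1 + 1) - 2 * k2 = s - k1 - 2 * k2 by omega]
        have hTs : T s k1 k2
            = D ^ k2 * C ^ k1 * B ^ (u - k1 - k2) * A ^ (s - k1 - 2 * k2) := rfl
        rcases k1 with _ | p
        · rw [hTs, hexp, t1, t2]
          simp only [Nat.cast_zero, zero_mul, zero_smul, add_zero, zero_nsmul, smul_zero]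
          rw [smul_add, hsw, hsw2]
        · have t3 : T (s + 1) (p + 1 - 1) (k2 + 1)
              = D ^ (k2 + 1) * C ^ (p + 1 - 1) * B ^ (u - (p + 1) - k2) * A ^ (s - (p + 1) - 2 * k2) := by
            simp only [hT, Nat.add_sub_cancel]
            rw [show u - p - (k2 + 1) = u - (p + 1) - k2 by omega,
              show s + 1 - p - 2 * (k2 + 1) = s - (p + 1) - 2 * k2 by omega]
          rw [hTs, hexp, t1, t2, t3]
          rw [smul_add, smul_add, hsw, hsw, hsw2, hsw2]
    calc A ^ (s + 1) * B ^ u = A * (A ^ s * B ^ u) := by rw [pow_succ', mul_assoc]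
      _ = ∑ k1 ∈ Finset.range (u + 1), ∑ k2 ∈ Finset.range (u + 1),
            gco K u s k1 k2 • (A * T s k1 k2) := by
          rw [ih, Finset.mul_sum]
          refine Finset.sum_congr rfl fun k1 _ => ?_
          rw [Finset.mul_sum]
          refine Finset.sum_congr rfl fun k2 _ => ?_
          rw [mul_smul_comm]
      _ = (∑ k1 ∈ Finset.range (u + 1), ∑ k2 ∈ Finset.range (u + 1),
              gco K u s k1 k2 • T (s + 1) k1 k2)
          + (∑ k1 ∈ Finset.range (u + 1), ∑ k2 ∈ Finset.range (u + 1),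
              (if 1 ≤ k1 then ((u - (k1 - 1) - k2 : ℕ) : K) * gco K u s (k1 - 1) k2 else 0)
                • T (s + 1) k1 k2)
          + (∑ k1 ∈ Finset.range (u + 1), ∑ k2 ∈ Finset.range (u + 1),
              (if 1 ≤ k2 then ((k1 + 1 : ℕ) : K) * gco K u s (k1 + 1) (k2 - 1) else 0)
                • T (s + 1) k1 k2) := by
          simp only [key, Finset.sum_add_distrib]
          congr 1
          · congr 1
            -- middle sums
            refine Eq.trans (Finset.sum_congr rfl fun k1 _ => ?_)
              (sum_shift (fun k1 => ∑ k2 ∈ Finset.range (u + 1),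
                (if 1 ≤ k1 then ((u - (k1 - 1) - k2 : ℕ) : K) * gco K u s (k1 - 1) k2 else 0)
                  • T (s + 1) k1 k2) u ?_ ?_)
            · refine Finset.sum_congr rfl fun k2 _ => ?_
              rw [if_pos (by omega), Nat.add_sub_cancel]
            · exact Finset.sum_eq_zero fun k2 _ => by rw [if_neg (by omega), zero_smul]
            · refine Finset.sum_eq_zero fun k2 _ => ?_
              rcases k2 with _ | q
              · rw [if_pos (by omega), show u + 1 - 1 = u by omega,
                  show u - u - 0 = 0 by omega]
                simp
              · rw [if_pos (by omega), show u + 1 - 1 = u by omega,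
                  gco_zero_left (by omega), mul_zero, zero_smul]
          · -- third sums
            have inner : ∀ k1, (∑ k2 ∈ Finset.range (u + 1),
                (((k1 : ℕ) : K) * gco K u s k1 k2) • T (s + 1) (k1 - 1) (k2 + 1))
              = ∑ k2 ∈ Finset.range (u + 1),
                (if 1 ≤ k1 ∧ 1 ≤ k2 then ((k1 : ℕ) : K) * gco K u s k1 (k2 - 1) else 0)
                  • T (s + 1) (k1 - 1) k2 := by
              intro k1
              refine Eq.trans (Finset.sum_congr rfl fun k2 _ => ?_)
                (sum_shift (fun k2 =>
                  (if 1 ≤ k1 ∧ 1 ≤ k2 then ((k1 : ℕ) : K) * gco K u s k1 (k2 - 1) else 0)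
                    • T (s + 1) (k1 - 1) k2) u ?_ ?_)
              · rcases k1 with _ | p
                · rw [if_neg (by omega)]
                  simp
                · rw [if_pos ⟨by omega, by omega⟩]
                  simp only [Nat.add_sub_cancel]
              · beta_reduce
                rw [if_neg (by omega), zero_smul]
              · beta_reduce
                by_cases h1 : 1 ≤ k1
                · rw [if_pos ⟨h1, by omega⟩, gco_zero_left (by omega), mul_zero, zero_smul]
                · rw [if_neg (by omega), zero_smul]
            simp only [inner]
            refine Eq.trans (sum_shift (fun k1 => ∑ k2 ∈ Finset.range (u + 1),
                (if 1 ≤ k1 ∧ 1 ≤ k2 then ((k1 : ℕ) : K) * gco K u s k1 (k2 - 1) else 0)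
                  • T (s + 1) (k1 - 1) k2) u ?_ ?_).symm
              (Finset.sum_congr rfl fun k1 _ => ?_)
            · exact Finset.sum_eq_zero fun k2 _ => by rw [if_neg (by omega), zero_smul]
            · refine Finset.sum_eq_zero fun k2 _ => ?_
              by_cases h1 : 1 ≤ k2
              · rw [if_pos ⟨by omega, h1⟩, gco_zero_left (by omega), mul_zero, zero_smul]
              · rw [if_neg (by omega), zero_smul]
            · refine Finset.sum_congr rfl fun k2 _ => ?_
              simp only [Nat.add_sub_cancel]
              by_cases h1 : 1 ≤ k2
              · rw [if_pos ⟨by omega, h1⟩, if_pos h1]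
              · rw [if_neg (by omega), if_neg (by omega)]
      _ = ∑ k1 ∈ Finset.range (u + 1), ∑ k2 ∈ Finset.range (u + 1),
            gco K u (s + 1) k1 k2 • T (s + 1) k1 k2 := by
          rw [← Finset.sum_add_distrib, ← Finset.sum_add_distrib]
          refine Finset.sum_congr rfl fun k1 _ => ?_
          rw [← Finset.sum_add_distrib, ← Finset.sum_add_distrib]
          refine Finset.sum_congr rfl fun k2 _ => ?_
          rw [← add_smul, ← add_smul, ← gco_rec]
end

section
/- Let L be a Lie algebra over a field of characteristic zero and let a, b, c, d, g be elements of L satisfying [a,b] = c, [a,c] = d, and [a,d] = g, with all other brackets among a, b, c, d, g equal to 0. Then for all nonnegative integers t and u, in the universal enveloping algebra U(L) one has a^t b^u = \sum_{k_1,k_2,k_3 \ge 0,\ k_1+k_2+k_3 \le u,\ k_1+2k_2+3k_3 \le t} \binom{u}{k_1+k_2+k_3} \binom{t}{k_1+2k_2+3k_3} \frac{(k_1+k_2+k_3)!\,(k_1+2k_2+3k_3)!}{(2!)^{k_2}(3!)^{k_3}\, k_3!\, k_2!\, k_1!} \, g^{k_3} d^{k_2} c^{k_1} b^{u-k_1-k_2-k_3}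 a^{t-k_1-2k_2-3k_3}. -/
open UniversalEnvelopingAlgebra

namespace Stmt6


def den (k1 k2 k3 : ℕ) : ℕ :=
  Nat.factorial 2 ^ k2 * Nat.factorial 3 ^ k3 * k3.factorial * k2.factorial * k1.factorial

def nm (t u k1 k2 k3 : ℕ) : ℕ :=
  u.choose (k1 + k2 + k3) * t.choose (k1 + 2*k2 + 3*k3)
    * (k1 + k2 + k3).factorial * (k1 + 2*k2 + 3*k3).factorial

noncomputable def Co (t u k1 k2 k3 : ℕ) : ℚ := (nm t u k1 k2 k3 : ℚ) / (den k1 k2 k3 : ℚ)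

lemma den_pos (k1 k2 k3 : ℕ) : 0 < den k1 k2 k3 := by
  unfold den; positivity

lemma den_ne (k1 k2 k3 : ℕ) : ((den k1 k2 k3 : ℕ) : ℚ) ≠ 0 := by
  exact_mod_cast (den_pos k1 k2 k3).ne'

lemma Co_eq_zero {t u k1 k2 k3 : ℕ} (h : ¬(k1 + k2 + k3 ≤ u ∧ k1 + 2*k2 + 3*k3 ≤ t)) :
    Co t u k1 k2 k3 = 0 := by
  unfold Co nm
  rcases not_and_or.mp h with h | h
  · rw [Nat.choose_eq_zero_of_lt (by omega)]; simp
  · rw [Nat.choose_eq_zero_of_lt (show t < k1 + 2*k2 + 3*k3 by omega)]; simp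

noncomputable def R2 (t u k1 k2 k3 : ℕ) : ℚ :=
  if k3 = 0 then 0 else ((k2:ℚ)+1) * Co t u k1 (k2+1) (k3-1)
noncomputable def R3 (t u k1 k2 k3 : ℕ) : ℚ :=
  if k2 = 0 then 0 else ((k1:ℚ)+1) * Co t u (k1+1) (k2-1) k3
noncomputable def R4 (t u k1 k2 k3 : ℕ) : ℚ :=
  if k1 = 0 then 0 else ((u + 1 - (k1+k2+k3) : ℕ) : ℚ) * Co t u (k1-1) k2 k3

noncomputable def base (t u k1 k2 k3 : ℕ) : ℚ :=
  ((u.choose (k1+k2+k3) * t.choose (k1 + 2*k2 + 3*k3 - 1)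
    * (k1+k2+k3).factorial * (k1 + 2*k2 + 3*k3 - 1).factorial : ℕ) : ℚ) / (den k1 k2 k3 : ℚ)

lemma R2_eq (t u k1 k2 k3 : ℕ) : R2 t u k1 k2 k3 = 3 * k3 * base t u k1 k2 k3 := by
  rcases k3 with _ | K
  · simp [R2]
  · unfold R2 Co nm base
    simp only [Nat.succ_ne_zero, if_false, Nat.add_sub_cancel]
    have h1 : k1 + (k2+1) + K = k1 + k2 + (K+1) := by ring
    have h2 : k1 + 2*(k2+1) + 3*K = k1 + 2*k2 + 3*(K+1) - 1 := by omega
    rw [h1, h2]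
    set N := u.choose (k1 + k2 + (K+1)) * t.choose (k1 + 2*k2 + 3*(K+1) - 1)
      * (k1 + k2 + (K+1)).factorial * (k1 + 2*k2 + 3*(K+1) - 1).factorial with hN
    rw [mul_div_assoc', mul_div_assoc', div_eq_div_iff (den_ne _ _ _) (den_ne _ _ _)]
    have e2 : (k2+1) * N * den k1 k2 (K+1) = 3*(K+1) * N * den k1 (k2+1) K := by
      simp only [den, Nat.factorial_succ, Nat.factorial, pow_succ, Nat.succ_eq_add_one]; ring
    exact_mod_cast e2

lemma R3_eq (t u k1 k2 k3 : ℕ) : R3 t u k1 k2 k3 = 2 * k2 * base t u k1 k2 k3 := by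
  rcases k2 with _ | K
  · simp [R3]
  · unfold R3 Co nm base
    simp only [Nat.succ_ne_zero, if_false, Nat.add_sub_cancel]
    have h1 : k1 + 1 + K + k3 = k1 + K + 1 + k3 := by ring
    have h2 : k1 + 1 + 2*K + 3*k3 = k1 + 2*(K+1) + 3*k3 - 1 := by omega
    rw [h1, h2]
    have h3 : k1 + K + 1 + k3 = k1 + (K+1) + k3 := by ring
    rw [h3]
    set N := u.choose (k1 + (K+1) + k3) * t.choose (k1 + 2*(K+1) + 3*k3 - 1)
      * (k1 + (K+1) + k3).factorial * (k1 + 2*(K+1) + 3*k3 - 1).factorial with hN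
    rw [mul_div_assoc', mul_div_assoc', div_eq_div_iff (den_ne _ _ _) (den_ne _ _ _)]
    have e2 : (k1+1) * N * den k1 (K+1) k3 = 2*(K+1) * N * den (k1+1) K k3 := by
      simp only [den, Nat.factorial_succ, Nat.factorial, pow_succ, Nat.succ_eq_add_one]; ring
    exact_mod_cast e2

lemma R4_eq (t u k1 k2 k3 : ℕ) : R4 t u k1 k2 k3 = k1 * base t u k1 k2 k3 := by
  rcases k1 with _ | K
  · simp [R4]
  · unfold R4 Co nm base
    simp only [Nat.succ_ne_zero, if_false, Nat.add_sub_cancel]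
    have h2 : K + 2*k2 + 3*k3 = K + 1 + 2*k2 + 3*k3 - 1 := by omega
    rw [h2]
    set W := K + 1 + 2*k2 + 3*k3 - 1 with hW
    set S := K + k2 + k3 with hS
    have hS2 : K + 1 + k2 + k3 = S + 1 := by omega
    rw [hS2]
    rw [mul_div_assoc', mul_div_assoc', div_eq_div_iff (den_ne _ _ _) (den_ne _ _ _)]
    have key : (u + 1 - (S+1)) * (u.choose S * t.choose W * S.factorial * W.factorial)
        * den (K+1) k2 k3
        = (K+1) * (u.choose (S+1) * t.choose W * (S+1).factorial * W.factorial)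
        * den K k2 k3 := by
      have hc : u.choose (S + 1) * (S + 1) = u.choose S * (u - S) := Nat.choose_succ_right_eq u S
      have hd : den (K+1) k2 k3 = (K+1) * den K k2 k3 := by
        simp only [den, Nat.factorial_succ]; ring
      have hu : u + 1 - (S+1) = u - S := by omega
      rw [hu, hd, Nat.factorial_succ]
      calc (u - S) * (u.choose S * t.choose W * S.factorial * W.factorial) * ((K+1) * den K k2 k3)
          = (u.choose S * (u - S)) * (t.choose W * S.factorial * W.factorial) * ((K+1) * den K k2 k3) := by ring
        _ = (u.choose (S+1) * (S+1)) * (t.choose W * S.factorial * W.factorial) * ((K+1) * den K k2 k3) := by rw [hc]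
        _ = (K+1) * (u.choose (S+1) * t.choose W * ((S+1) * S.factorial) * W.factorial) * den K k2 k3 := by ring
    have hu2 : ((u + 1 - (S+1) : ℕ) : ℚ) = ((u + 1 - (S+1) : ℕ) : ℚ) := rfl
    exact_mod_cast key

lemma Co_rec (t u k1 k2 k3 : ℕ) :
    Co (t+1) u k1 k2 k3 =
      Co t u k1 k2 k3 + R2 t u k1 k2 k3 + R3 t u k1 k2 k3 + R4 t u k1 k2 k3 := by
  rw [R2_eq, R3_eq, R4_eq]
  by_cases h0 : k1 + 2*k2 + 3*k3 = 0
  · obtain ⟨e1, e2, e3⟩ : k1 = 0 ∧ k2 = 0 ∧ k3 = 0 := by omega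
    subst e1; subst e2; subst e3
    simp [Co, nm]
  · obtain ⟨W, hW⟩ : ∃ W, k1 + 2*k2 + 3*k3 = W + 1 := ⟨k1 + 2*k2 + 3*k3 - 1, by omega⟩
    have key : Co (t+1) u k1 k2 k3 = Co t u k1 k2 k3 + (k1 + 2*k2 + 3*k3 : ℚ) * base t u k1 k2 k3 := by
      unfold Co nm base
      rw [hW]
      simp only [Nat.add_sub_cancel]
      rw [Nat.choose_succ_succ t W, Nat.factorial_succ (W)]
      have hWq : (k1:ℚ) + 2*k2 + 3*k3 = (W:ℚ) + 1 := by exact_mod_cast hW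
      push_cast [Nat.succ_eq_add_one]
      rw [hWq]
      field_simp
      ring
    rw [key]; push_cast; ring



variable {A : Type*} [Ring A]

lemma comm_pow {x y z : A} (h : x * y = y * x + z) (hz : y * z = z * y) (m : ℕ) :
    x * y ^ m = y ^ m * x + m • (z * y ^ (m - 1)) := by
  induction m with
  | zero => simp
  | succ m ih =>
    have hmz : m • (y * (z * y ^ (m - 1))) = m • (z * y ^ m) := by
      rcases m with _ | m
      · simp
      · congr 1
        rw [← mul_assoc, hz, mul_assoc, Nat.add_sub_cancel, ← pow_succ']
    calc x * y ^ (m+1) = y * (x * y ^ m) + z * y ^ m := by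
          rw [pow_succ' y m, ← mul_assoc, h, add_mul, mul_assoc]
      _ = y * (y ^ m * x + m • (z * y ^ (m-1))) + z * y ^ m := by rw [ih]
      _ = y ^ (m+1) * x + (m • (y * (z * y ^ (m-1))) + z * y ^ m) := by
          rw [mul_add, ← mul_assoc, ← pow_succ', mul_smul_comm]; abel
      _ = y ^ (m+1) * x + (m+1) • (z * y ^ (m+1-1)) := by
          rw [hmz, Nat.add_sub_cancel, succ_nsmul]

lemma comm_pow' {x y : A} (h : x * y = y * x) (m : ℕ) : x * y ^ m = y ^ m * x :=
  ((Commute.pow_right h m)).eq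




variable {A : Type*} [Ring A]

lemma comm_pow_mul {x y z : A} (h : x * y = y * x + z) (hz : y * z = z * y) (m : ℕ) (X : A) :
    x * (y ^ m * X) = y ^ m * (x * X) + m • (z * (y ^ (m - 1) * X)) := by
  rw [← mul_assoc, comm_pow h hz m, add_mul, smul_mul_assoc, mul_assoc, mul_assoc]

lemma comm_pow'_mul {x y : A} (h : x * y = y * x) (m : ℕ) (X : A) :
    x * (y ^ m * X) = y ^ m * (x * X) := by
  rw [← mul_assoc, comm_pow' h m, mul_assoc]

variable {a b c d g : A}
  (hab : a * b = b * a + c) (hac : a * c = c * a + d) (had : a * d = d * a + g)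
  (hag : a * g = g * a) (hbc : b * c = c * b) (hcd : c * d = d * c) (hdg : d * g = g * d)

include hab hac had hag hbc hcd hdg in
lemma term_exp (k1 k2 k3 m n : ℕ) :
    a * (g ^ k3 * (d ^ k2 * (c ^ k1 * (b ^ m * a ^ n))))
    = g ^ k3 * (d ^ k2 * (c ^ k1 * (b ^ m * a ^ (n+1))))
    + k2 • (g ^ (k3+1) * (d ^ (k2-1) * (c ^ k1 * (b ^ m * a ^ n))))
    + k1 • (g ^ k3 * (d ^ (k2+1) * (c ^ (k1-1) * (b ^ m * a ^ n))))
    + m • (g ^ k3 * (d ^ k2 * (c ^ (k1+1) * (b ^ (m-1) * a ^ n)))) := by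
  have e4 : a * (b ^ m * a ^ n) = b ^ m * a ^ (n+1) + m • (c * (b ^ (m-1) * a ^ n)) := by
    rw [comm_pow_mul hab hbc, ← pow_succ' a n]
  have e3 : a * (c ^ k1 * (b ^ m * a ^ n))
      = c ^ k1 * (b ^ m * a ^ (n+1)) + k1 • (d * (c ^ (k1-1) * (b ^ m * a ^ n)))
        + m • (c ^ (k1+1) * (b ^ (m-1) * a ^ n)) := by
    rw [comm_pow_mul hac hcd, e4, mul_add, mul_smul_comm, ← mul_assoc (c ^ k1) c, ← pow_succ]
    abel
  have e2 : a * (d ^ k2 * (c ^ k1 * (b ^ m * a ^ n)))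
      = d ^ k2 * (c ^ k1 * (b ^ m * a ^ (n+1)))
        + k2 • (g * (d ^ (k2-1) * (c ^ k1 * (b ^ m * a ^ n))))
        + k1 • (d ^ (k2+1) * (c ^ (k1-1) * (b ^ m * a ^ n)))
        + m • (d ^ k2 * (c ^ (k1+1) * (b ^ (m-1) * a ^ n))) := by
    rw [comm_pow_mul had hdg, e3, mul_add, mul_add, mul_smul_comm, mul_smul_comm,
      ← mul_assoc (d ^ k2) d, ← pow_succ]
    abel
  rw [comm_pow'_mul hag, e2, mul_add, mul_add, mul_add, mul_smul_comm, mul_smul_comm,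
    mul_smul_comm, ← mul_assoc (g ^ k3) g, ← pow_succ]


def SS (u : ℕ) : Finset (ℕ × ℕ × ℕ) :=
  Finset.range (u+1) ×ˢ (Finset.range (u+1) ×ˢ Finset.range (u+1))

lemma mem_SS {u : ℕ} {p : ℕ × ℕ × ℕ} :
    p ∈ SS u ↔ p.1 ≤ u ∧ p.2.1 ≤ u ∧ p.2.2 ≤ u := by
  simp [SS, Nat.lt_succ_iff]
variable {K : Type*} [Field K] [CharZero K] {V : Type*} [AddCommMonoid V] [Module K V]

lemma sum2 (t u : ℕ) (F : ℕ → ℕ → ℕ → V) :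
    ∑ p ∈ SS u, (((p.2.1 : ℚ) * Co t u p.1 p.2.1 p.2.2 : ℚ) : K) • F p.1 (p.2.1 - 1) (p.2.2 + 1)
    = ∑ q ∈ SS u, ((R2 t u q.1 q.2.1 q.2.2 : ℚ) : K) • F q.1 q.2.1 q.2.2 := by
  conv_lhs => rw [← Finset.sum_filter_of_ne
      (p := fun p : ℕ × ℕ × ℕ => p.2.1 ≠ 0 ∧ p.1 + p.2.1 + p.2.2 ≤ u)
      (by
        rintro ⟨p1, p2, p3⟩ hp hne
        by_contra hP
        apply hne
        dsimp only at hP ⊢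
        rcases not_and_or.mp hP with h | h
        · simp only [not_not] at h; simp [h]
        · rw [Co_eq_zero (by omega)]; simp)]
  conv_rhs => rw [← Finset.sum_filter_of_ne
      (p := fun q : ℕ × ℕ × ℕ => q.2.2 ≠ 0 ∧ q.1 + q.2.1 + q.2.2 ≤ u)
      (by
        rintro ⟨q1, q2, q3⟩ hq hne
        by_contra hQ
        apply hne
        dsimp only at hQ ⊢
        rcases q3 with _ | q3
        · simp [R2]
        · rcases not_and_or.mp hQ with h | h
          · omega
          · simp only [R2, Nat.succ_ne_zero, if_false, Nat.add_sub_cancel]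
            rw [Co_eq_zero (by omega)]; simp)]
  refine Finset.sum_nbij' (fun p => (p.1, p.2.1 - 1, p.2.2 + 1)) (fun q => (q.1, q.2.1 + 1, q.2.2 - 1)) ?_ ?_ ?_ ?_ ?_
  · rintro ⟨p1, p2, p3⟩ hp
    simp only [Finset.mem_filter, mem_SS] at hp ⊢
    omega
  · rintro ⟨q1, q2, q3⟩ hq
    simp only [Finset.mem_filter, mem_SS] at hq ⊢
    omega
  · rintro ⟨p1, p2, p3⟩ hp
    simp only [Finset.mem_filter, mem_SS] at hp
    dsimp only
    simp only [Prod.mk.injEq, true_and, and_true]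
    omega
  · rintro ⟨q1, q2, q3⟩ hq
    simp only [Finset.mem_filter, mem_SS] at hq
    dsimp only
    simp only [Prod.mk.injEq, true_and, and_true]
    omega
  · rintro ⟨p1, p2, p3⟩ hp
    simp only [Finset.mem_filter, mem_SS] at hp
    dsimp only at hp ⊢
    obtain ⟨-, hp2, hsu⟩ := hp
    have e1 : p2 - 1 + 1 = p2 := by omega
    congr 1
    congr 1
    simp only [R2, Nat.add_sub_cancel, Nat.succ_ne_zero, if_false]
    rw [e1]
    rw [show ((p2 - 1 : ℕ) : ℚ) + 1 = (p2 : ℚ) by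
      have h1 : 1 ≤ p2 := by omega
      push_cast [h1]; ring]

lemma sum3 (t u : ℕ) (F : ℕ → ℕ → ℕ → V) :
    ∑ p ∈ SS u, (((p.1 : ℚ) * Co t u p.1 p.2.1 p.2.2 : ℚ) : K) • F (p.1 - 1) (p.2.1 + 1) p.2.2
    = ∑ q ∈ SS u, ((R3 t u q.1 q.2.1 q.2.2 : ℚ) : K) • F q.1 q.2.1 q.2.2 := by
  conv_lhs => rw [← Finset.sum_filter_of_ne
      (p := fun p : ℕ × ℕ × ℕ => p.1 ≠ 0 ∧ p.1 + p.2.1 + p.2.2 ≤ u)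
      (by
        rintro ⟨p1, p2, p3⟩ hp hne
        by_contra hP
        apply hne
        dsimp only at hP ⊢
        rcases not_and_or.mp hP with h | h
        · simp only [not_not] at h; simp [h]
        · rw [Co_eq_zero (by omega)]; simp)]
  conv_rhs => rw [← Finset.sum_filter_of_ne
      (p := fun q : ℕ × ℕ × ℕ => q.2.1 ≠ 0 ∧ q.1 + q.2.1 + q.2.2 ≤ u)
      (by
        rintro ⟨q1, q2, q3⟩ hq hne
        by_contra hQ
        apply hne
        dsimp only at hQ ⊢
        rcases q2 with _ | q2
        · simp [R3]
        · rcases not_and_or.mp hQ with h | h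
          · omega
          · simp only [R3, Nat.succ_ne_zero, if_false, Nat.add_sub_cancel]
            rw [Co_eq_zero (by omega)]; simp)]
  refine Finset.sum_nbij' (fun p => (p.1 - 1, p.2.1 + 1, p.2.2)) (fun q => (q.1 + 1, q.2.1 - 1, q.2.2)) ?_ ?_ ?_ ?_ ?_
  · rintro ⟨p1, p2, p3⟩ hp
    simp only [Finset.mem_filter, mem_SS] at hp ⊢
    omega
  · rintro ⟨q1, q2, q3⟩ hq
    simp only [Finset.mem_filter, mem_SS] at hq ⊢
    omega
  · rintro ⟨p1, p2, p3⟩ hp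
    simp only [Finset.mem_filter, mem_SS] at hp
    dsimp only
    simp only [Prod.mk.injEq, true_and, and_true]
    omega
  · rintro ⟨q1, q2, q3⟩ hq
    simp only [Finset.mem_filter, mem_SS] at hq
    dsimp only
    simp only [Prod.mk.injEq, true_and, and_true]
    omega
  · rintro ⟨p1, p2, p3⟩ hp
    simp only [Finset.mem_filter, mem_SS] at hp
    dsimp only at hp ⊢
    obtain ⟨-, hp1, hsu⟩ := hp
    have e1 : p1 - 1 + 1 = p1 := by omega
    congr 1
    congr 1
    simp only [R3, Nat.add_sub_cancel, Nat.succ_ne_zero, if_false]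
    rw [e1]
    rw [show ((p1 - 1 : ℕ) : ℚ) + 1 = (p1 : ℚ) by
      have h1 : 1 ≤ p1 := by omega
      push_cast [h1]; ring]

lemma sum4 (t u : ℕ) (F : ℕ → ℕ → ℕ → V) :
    ∑ p ∈ SS u, ((((u - (p.1 + p.2.1 + p.2.2) : ℕ) : ℚ) * Co t u p.1 p.2.1 p.2.2 : ℚ) : K) • F (p.1 + 1) p.2.1 p.2.2
    = ∑ q ∈ SS u, ((R4 t u q.1 q.2.1 q.2.2 : ℚ) : K) • F q.1 q.2.1 q.2.2 := by
  conv_lhs => rw [← Finset.sum_filter_of_ne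
      (p := fun p : ℕ × ℕ × ℕ => p.1 + p.2.1 + p.2.2 < u)
      (by
        rintro ⟨p1, p2, p3⟩ hp hne
        by_contra hP
        apply hne
        dsimp only at hP ⊢
        rw [show u - (p1 + p2 + p3) = 0 by omega]; simp)]
  conv_rhs => rw [← Finset.sum_filter_of_ne
      (p := fun q : ℕ × ℕ × ℕ => q.1 ≠ 0 ∧ q.1 + q.2.1 + q.2.2 ≤ u)
      (by
        rintro ⟨q1, q2, q3⟩ hq hne
        by_contra hQ
        apply hne
        dsimp only at hQ ⊢
        rcases q1 with _ | q1
        · simp [R4]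
        · rcases not_and_or.mp hQ with h | h
          · omega
          · simp only [R4, Nat.succ_ne_zero, if_false, Nat.add_sub_cancel]
            rcases Nat.lt_or_ge (u + 1) (q1 + 1 + q2 + q3) with h2 | h2
            · rw [Co_eq_zero (by omega)]; simp
            · rw [show u + 1 - (q1 + 1 + q2 + q3) = 0 by omega]; simp)]
  refine Finset.sum_nbij' (fun p => (p.1 + 1, p.2.1, p.2.2)) (fun q => (q.1 - 1, q.2.1, q.2.2)) ?_ ?_ ?_ ?_ ?_
  · rintro ⟨p1, p2, p3⟩ hp
    simp only [Finset.mem_filter, mem_SS] at hp ⊢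
    omega
  · rintro ⟨q1, q2, q3⟩ hq
    simp only [Finset.mem_filter, mem_SS] at hq ⊢
    omega
  · rintro ⟨p1, p2, p3⟩ hp
    simp only [Finset.mem_filter, mem_SS] at hp
    dsimp only
    simp only [Prod.mk.injEq, true_and, and_true]
    omega
  · rintro ⟨q1, q2, q3⟩ hq
    simp only [Finset.mem_filter, mem_SS] at hq
    dsimp only
    simp only [Prod.mk.injEq, true_and, and_true]
    omega
  · rintro ⟨p1, p2, p3⟩ hp
    simp only [Finset.mem_filter, mem_SS] at hp
    dsimp only at hp ⊢
    congr 1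
    congr 1
    simp only [R4, Nat.add_sub_cancel, Nat.succ_ne_zero, if_false]
    rw [show u + 1 - (p1 + 1 + p2 + p3) = u - (p1 + p2 + p3) by omega]


section Main

def Mt {A : Type*} [Ring A] (a b c d g : A) (u t k1 k2 k3 : ℕ) : A :=
  g ^ k3 * (d ^ k2 * (c ^ k1 * (b ^ (u - k1 - k2 - k3) * a ^ (t - k1 - 2*k2 - 3*k3))))

lemma nsmul_congr {M : Type*} [AddMonoid M] (k : ℕ) {x y : M} (h : k ≠ 0 → x = y) :
    k • x = k • y := by
  rcases Nat.eq_zero_or_pos k with h0 | h0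
  · simp [h0]
  · rw [h (by omega)]

theorem aux {K : Type*} [Field K] [CharZero K] {A : Type*} [Ring A] [Algebra K A]
    {a b c d g : A}
    (hab : a * b = b * a + c) (hac : a * c = c * a + d) (had : a * d = d * a + g)
    (hag : a * g = g * a) (hbc : b * c = c * b) (hcd : c * d = d * c) (hdg : d * g = g * d)
    (u t : ℕ) : a ^ t * b ^ u =
      ∑ p ∈ SS u, ((Co t u p.1 p.2.1 p.2.2 : ℚ) : K) • Mt a b c d g u t p.1 p.2.1 p.2.2 := by
  induction t with
  | zero =>
    rw [Finset.sum_eq_single (0, 0, 0)]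
    · simp [Co, nm, den, Mt]
    · rintro ⟨p1, p2, p3⟩ hp hne
      have hnz : ¬(p1 = 0 ∧ p2 = 0 ∧ p3 = 0) := by simpa [Prod.ext_iff] using hne
      dsimp only
      rw [Co_eq_zero (t := 0) (by omega)]
      simp
    · intro h; exact absurd (mem_SS.mpr (by simp)) h
  | succ t ih =>
    have hconv : ∀ (k : ℕ) (r : ℚ) (x : A), (((k : ℚ) * r : ℚ) : K) • x = k • ((r : K) • x) := by
      intro k r x
      push_cast
      rw [mul_smul, Nat.cast_smul_eq_nsmul]
    have key : ∀ p ∈ SS u,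
        ((Co t u p.1 p.2.1 p.2.2 : ℚ) : K) • (a * Mt a b c d g u t p.1 p.2.1 p.2.2)
        = ((Co t u p.1 p.2.1 p.2.2 : ℚ) : K) • Mt a b c d g u (t+1) p.1 p.2.1 p.2.2
          + (((p.2.1 : ℚ) * Co t u p.1 p.2.1 p.2.2 : ℚ) : K) • Mt a b c d g u (t+1) p.1 (p.2.1 - 1) (p.2.2 + 1)
          + (((p.1 : ℚ) * Co t u p.1 p.2.1 p.2.2 : ℚ) : K) • Mt a b c d g u (t+1) (p.1 - 1) (p.2.1 + 1) p.2.2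
          + ((((u - (p.1 + p.2.1 + p.2.2) : ℕ) : ℚ) * Co t u p.1 p.2.1 p.2.2 : ℚ) : K) • Mt a b c d g u (t+1) (p.1 + 1) p.2.1 p.2.2 := by
      rintro ⟨k1, k2, k3⟩ hp
      dsimp only
      by_cases hcond : k1 + k2 + k3 ≤ u ∧ k1 + 2*k2 + 3*k3 ≤ t
      · obtain ⟨hs, hw⟩ := hcond
        have eM1 : Mt a b c d g u (t+1) k1 k2 k3
            = g ^ k3 * (d ^ k2 * (c ^ k1 * (b ^ (u - k1 - k2 - k3) * a ^ (t - k1 - 2*k2 - 3*k3 + 1)))) := by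
          unfold Mt
          rw [show t + 1 - k1 - 2*k2 - 3*k3 = t - k1 - 2*k2 - 3*k3 + 1 from by omega]
        have eM2 : k2 ≠ 0 → Mt a b c d g u (t+1) k1 (k2-1) (k3+1)
            = g ^ (k3+1) * (d ^ (k2-1) * (c ^ k1 * (b ^ (u - k1 - k2 - k3) * a ^ (t - k1 - 2*k2 - 3*k3)))) := by
          intro hk
          unfold Mt
          rw [show u - k1 - (k2-1) - (k3+1) = u - k1 - k2 - k3 from by omega,
            show t + 1 - k1 - 2*(k2-1) - 3*(k3+1) = t - k1 - 2*k2 - 3*k3 from by omega]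
        have eM3 : k1 ≠ 0 → Mt a b c d g u (t+1) (k1-1) (k2+1) k3
            = g ^ k3 * (d ^ (k2+1) * (c ^ (k1-1) * (b ^ (u - k1 - k2 - k3) * a ^ (t - k1 - 2*k2 - 3*k3)))) := by
          intro hk
          unfold Mt
          rw [show u - (k1-1) - (k2+1) - k3 = u - k1 - k2 - k3 from by omega,
            show t + 1 - (k1-1) - 2*(k2+1) - 3*k3 = t - k1 - 2*k2 - 3*k3 from by omega]
        have eM4 : Mt a b c d g u (t+1) (k1+1) k2 k3
            = g ^ k3 * (d ^ k2 * (c ^ (k1+1) * (b ^ (u - k1 - k2 - k3 - 1) * a ^ (t - k1 - 2*k2 - 3*k3)))) := by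
          unfold Mt
          rw [show u - (k1+1) - k2 - k3 = u - k1 - k2 - k3 - 1 from by omega,
            show t + 1 - (k1+1) - 2*k2 - 3*k3 = t - k1 - 2*k2 - 3*k3 from by omega]
        rw [show Mt a b c d g u t k1 k2 k3
            = g ^ k3 * (d ^ k2 * (c ^ k1 * (b ^ (u - k1 - k2 - k3) * a ^ (t - k1 - 2*k2 - 3*k3)))) from rfl]
        rw [term_exp hab hac had hag hbc hcd hdg]
        rw [smul_add, smul_add, smul_add]
        congr 1
        congr 1
        congr 1
        · rw [eM1]
        · rw [hconv, smul_comm]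
          exact nsmul_congr k2 (fun hk => by rw [eM2 hk])
        · rw [hconv, smul_comm]
          exact nsmul_congr k1 (fun hk => by rw [eM3 hk])
        · rw [hconv, smul_comm, eM4]
          rw [show u - (k1 + k2 + k3) = u - k1 - k2 - k3 from by omega]
      · rw [Co_eq_zero hcond]
        simp
    calc a ^ (t+1) * b ^ u = a * (a ^ t * b ^ u) := by rw [pow_succ', mul_assoc]
      _ = ∑ p ∈ SS u, ((Co t u p.1 p.2.1 p.2.2 : ℚ) : K) • (a * Mt a b c d g u t p.1 p.2.1 p.2.2) := by
          rw [ih, Finset.mul_sum]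
          simp_rw [mul_smul_comm]
      _ = ∑ p ∈ SS u,
            (((Co t u p.1 p.2.1 p.2.2 : ℚ) : K) • Mt a b c d g u (t+1) p.1 p.2.1 p.2.2
            + (((p.2.1 : ℚ) * Co t u p.1 p.2.1 p.2.2 : ℚ) : K) • Mt a b c d g u (t+1) p.1 (p.2.1 - 1) (p.2.2 + 1)
            + (((p.1 : ℚ) * Co t u p.1 p.2.1 p.2.2 : ℚ) : K) • Mt a b c d g u (t+1) (p.1 - 1) (p.2.1 + 1) p.2.2
            + ((((u - (p.1 + p.2.1 + p.2.2) : ℕ) : ℚ) * Co t u p.1 p.2.1 p.2.2 : ℚ) : K) • Mt a b c d g u (t+1) (p.1 + 1) p.2.1 p.2.2) :=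
          Finset.sum_congr rfl key
      _ = ∑ p ∈ SS u, ((Co t u p.1 p.2.1 p.2.2 : ℚ) : K) • Mt a b c d g u (t+1) p.1 p.2.1 p.2.2
          + ∑ p ∈ SS u, (((p.2.1 : ℚ) * Co t u p.1 p.2.1 p.2.2 : ℚ) : K) • Mt a b c d g u (t+1) p.1 (p.2.1 - 1) (p.2.2 + 1)
          + ∑ p ∈ SS u, (((p.1 : ℚ) * Co t u p.1 p.2.1 p.2.2 : ℚ) : K) • Mt a b c d g u (t+1) (p.1 - 1) (p.2.1 + 1) p.2.2
          + ∑ p ∈ SS u, ((((u - (p.1 + p.2.1 + p.2.2) : ℕ) : ℚ) * Co t u p.1 p.2.1 p.2.2 : ℚ) : K) • Mt a b c d g u (t+1) (p.1 + 1) p.2.1 p.2.2 := by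
          rw [Finset.sum_add_distrib, Finset.sum_add_distrib, Finset.sum_add_distrib]
      _ = ∑ p ∈ SS u, ((Co t u p.1 p.2.1 p.2.2 : ℚ) : K) • Mt a b c d g u (t+1) p.1 p.2.1 p.2.2
          + ∑ q ∈ SS u, ((R2 t u q.1 q.2.1 q.2.2 : ℚ) : K) • Mt a b c d g u (t+1) q.1 q.2.1 q.2.2
          + ∑ q ∈ SS u, ((R3 t u q.1 q.2.1 q.2.2 : ℚ) : K) • Mt a b c d g u (t+1) q.1 q.2.1 q.2.2
          + ∑ q ∈ SS u, ((R4 t u q.1 q.2.1 q.2.2 : ℚ) : K) • Mt a b c d g u (t+1) q.1 q.2.1 q.2.2 := by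
          rw [sum2 t u (Mt a b c d g u (t+1)), sum3 t u (Mt a b c d g u (t+1)),
            sum4 t u (Mt a b c d g u (t+1))]
      _ = ∑ p ∈ SS u, ((Co (t+1) u p.1 p.2.1 p.2.2 : ℚ) : K) • Mt a b c d g u (t+1) p.1 p.2.1 p.2.2 := by
          rw [← Finset.sum_add_distrib, ← Finset.sum_add_distrib, ← Finset.sum_add_distrib]
          refine Finset.sum_congr rfl ?_
          intro q hq
          rw [Co_rec]
          push_cast
          rw [add_smul, add_smul, add_smul]

end Main

end Stmt6

attribute [local instance 100] LieRing.ofAssociativeRing LieAlgebra.ofAssociativeAlgebra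

theorem stmt_6 {K : Type*} [Field K] [CharZero K]
    {L : Type*} [LieRing L] [LieAlgebra K L]
    (a b c d g : L)
    (hab : ⁅a, b⁆ = c) (hac : ⁅a, c⁆ = d) (had : ⁅a, d⁆ = g) (hag : ⁅a, g⁆ = 0) (hbc : ⁅b, c⁆ = 0) (hbd : ⁅b, d⁆ = 0) (hbg : ⁅b, g⁆ = 0) (hcd : ⁅c, d⁆ = 0) (hcg : ⁅c, g⁆ = 0) (hdg : ⁅d, g⁆ = 0)
    (t u : ℕ) :
    (ι K a : UniversalEnvelopingAlgebra K L) ^ (t) * (ι K b : UniversalEnvelopingAlgebra K L) ^ (u) =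
      ∑ k1 ∈ Finset.range (u + 1), ∑ k2 ∈ Finset.range (u + 1), ∑ k3 ∈ Finset.range (u + 1),
        if k1 + k2 + k3 ≤ u ∧ k1 + 2 * k2 + 3 * k3 ≤ t then
          ((((u.choose (k1 + k2 + k3) * t.choose (k1 + 2 * k2 + 3 * k3)
              * (k1 + k2 + k3).factorial * (k1 + 2 * k2 + 3 * k3).factorial : ℕ) : K))
            / (((Nat.factorial 2) ^ k2 * (Nat.factorial 3) ^ k3
                * k3.factorial * k2.factorial * k1.factorial : ℕ) : K)) •
            ((ι K g : UniversalEnvelopingAlgebra K L) ^ (k3) * (ι K d : UniversalEnvelopingAlgebra K L) ^ (k2) * (ι K c : UniversalEnvelopingAlgebra K L) ^ (k1)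
              * (ι K b : UniversalEnvelopingAlgebra K L) ^ (u - k1 - k2 - k3) * (ι K a : UniversalEnvelopingAlgebra K L) ^ (t - k1 - 2 * k2 - 3 * k3))
        else 0 := by
  have lie : ∀ x y z : L, ⁅x, y⁆ = z →
      (ι K x : UniversalEnvelopingAlgebra K L) * ι K y = ι K y * ι K x + ι K z := by
    intro x y z h
    have h2 := (ι K (L := L)).map_lie x y
    rw [h, Ring.lie_def] at h2
    rw [h2]; abel
  have comm : ∀ x y : L, ⁅x, y⁆ = 0 →
      (ι K x : UniversalEnvelopingAlgebra K L) * ι K y = ι K y * ι K x := by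
    intro x y h
    have h2 := lie x y 0 h
    have z0 : (ι K) (0 : L) = (0 : UniversalEnvelopingAlgebra K L) :=
      map_zero (ι K (L := L)).toLinearMap
    rw [z0] at h2
    simpa using h2
  have main := Stmt6.aux (K := K) (lie a b c hab) (lie a c d hac) (lie a d g had)
      (comm a g hag) (comm b c hbc) (comm c d hcd) (comm d g hdg) u t
  rw [main, Stmt6.SS, Finset.sum_product]
  refine Finset.sum_congr rfl ?_
  intro k1 _
  rw [Finset.sum_product]
  refine Finset.sum_congr rfl ?_
  intro k2 _
  refine Finset.sum_congr rfl ?_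
  intro k3 _
  dsimp only
  by_cases hcond : k1 + k2 + k3 ≤ u ∧ k1 + 2 * k2 + 3 * k3 ≤ t
  · rw [if_pos hcond]
    rw [show ((Stmt6.Co t u k1 k2 k3 : ℚ) : K)
        = ((Stmt6.nm t u k1 k2 k3 : ℕ) : K) / ((Stmt6.den k1 k2 k3 : ℕ) : K) from by
      rw [Stmt6.Co]; push_cast; ring]
    rw [Stmt6.nm, Stmt6.den, Stmt6.Mt]
    congr 1
    simp only [mul_assoc]
  · rw [if_neg hcond, Stmt6.Co_eq_zero hcond]
    simp
end

section
/- Let L be a Lie algebra over a field of characteristic zero and let a, b, c, d, g be elements of L satisfying [a,b] = c, [a,c] = d, [a,d] = g, and [b,c] = -g, with all other brackets among a, b, c, d, g equal to 0. Then for all natural numbers u ≥ 1, in the universal enveloping algebra U(L) one has a b^u = b^u a + u c b^{u-1} - \binom{u}{2} g b^{u-2}. -/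
open UniversalEnvelopingAlgebra

section Aux

variable {K : Type*} [Field K] [CharZero K]
    {L : Type*} [LieRing L] [LieAlgebra K L]

attribute [local instance 100] LieRing.ofAssociativeRing

omit [CharZero K] in
lemma stmt7_comm (x y : L) :
    (ι K x : UniversalEnvelopingAlgebra K L) * ι K y = ι K y * ι K x + ι K ⁅x, y⁆ := by
  have h := (ι K : L →ₗ⁅K⁆ UniversalEnvelopingAlgebra K L).map_lie x y
  rw [Ring.lie_def] at h
  rw [h]; abel

omit [CharZero K] in
lemma stmt7_CB {b c g : L} (hbc : ⁅b, c⁆ = -g) (hbg : ⁅b, g⁆ = 0) :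
    ∀ n : ℕ, (ι K b : UniversalEnvelopingAlgebra K L) ^ (n + 1) * ι K c
      = ι K c * (ι K b : UniversalEnvelopingAlgebra K L) ^ (n + 1)
        - (n + 1) • (ι K g * (ι K b : UniversalEnvelopingAlgebra K L) ^ n) := by
  have hcb : ⁅c, b⁆ = g := by rw [← lie_skew, hbc, neg_neg]
  have hgb : ⁅g, b⁆ = 0 := by rw [← lie_skew, hbg, neg_zero]
  set B : UniversalEnvelopingAlgebra K L := ι K b with hB
  set C : UniversalEnvelopingAlgebra K L := ι K c with hC
  set G : UniversalEnvelopingAlgebra K L := ι K g with hG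
  have hCB : C * B = B * C + G := by
    rw [hB, hC, hG, stmt7_comm c b, hcb]
  have hGB : G * B = B * G := by
    rw [hB, hG, stmt7_comm g b, hgb, map_zero, add_zero]
  have hBC : B * C = C * B - G := by rw [hCB]; abel
  have hBG : B * G = G * B := hGB.symm
  intro n
  induction n with
  | zero => simp only [zero_add, pow_one, pow_zero, one_smul, mul_one]; rw [hCB]; abel
  | succ n ih =>
    calc B ^ (n + 1 + 1) * C = B * (B ^ (n + 1) * C) := by
          rw [← mul_assoc, ← pow_succ']
      _ = (B * C) * B ^ (n + 1) - (n + 1) • ((B * G) * B ^ n) := by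
          rw [ih, mul_sub, ← mul_assoc, mul_smul_comm, ← mul_assoc]
      _ = C * (B * B ^ (n + 1)) - G * B ^ (n + 1) - (n + 1) • (G * (B * B ^ n)) := by
          rw [hBC, hBG, sub_mul, mul_assoc, mul_assoc]
      _ = C * B ^ (n + 1 + 1) - G * B ^ (n + 1) - (n + 1) • (G * B ^ (n + 1)) := by
          rw [← pow_succ', ← pow_succ']
      _ = C * B ^ (n + 1 + 1) - (n + 1 + 1) • (G * B ^ (n + 1)) := by
          module

omit [CharZero K] in
lemma stmt7_AB {a b c g : L} (hab : ⁅a, b⁆ = c) (hbc : ⁅b, c⁆ = -g) (hbg : ⁅b, g⁆ = 0) :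
    ∀ n : ℕ, (ι K a : UniversalEnvelopingAlgebra K L) * ι K b ^ (n + 1)
      = (ι K b : UniversalEnvelopingAlgebra K L) ^ (n + 1) * ι K a
        + (n + 1) • (ι K c * (ι K b : UniversalEnvelopingAlgebra K L) ^ n)
        - ((n + 1).choose 2) • (ι K g * (ι K b : UniversalEnvelopingAlgebra K L) ^ (n - 1)) := by
  have hcb : ⁅c, b⁆ = g := by rw [← lie_skew, hbc, neg_neg]
  set A : UniversalEnvelopingAlgebra K L := ι K a with hA
  set B : UniversalEnvelopingAlgebra K L := ι K b with hB
  set C : UniversalEnvelopingAlgebra K L := ι K c with hC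
  set G : UniversalEnvelopingAlgebra K L := ι K g with hG
  have hAB : A * B = B * A + C := by rw [hA, hB, hC, stmt7_comm a b, hab]
  have hCB : C * B = B * C + G := by rw [hB, hC, hG, stmt7_comm c b, hcb]
  have hBC : B * C = C * B - G := by rw [hCB]; abel
  intro n
  induction n with
  | zero => simp [pow_one, hAB]
  | succ n ih =>
    cases n with
    | zero =>
      have e : A * B ^ 2 = B ^ 2 * A + B * C + C * B := by
        rw [pow_two, ← mul_assoc, hAB, add_mul, mul_assoc, hAB]
        noncomm_ring
      norm_num
      rw [e, hBC]
      noncomm_ring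
    | succ m =>
      have hch : (m + 1 + 1 + 1).choose 2 = (m + 1 + 1).choose 2 + (m + 1 + 1) := by
        rw [Nat.choose_succ_succ, Nat.choose_one_right, Nat.add_comm]
      have hs : m + 1 - 1 = m := by omega
      rw [hs] at ih
      calc A * B ^ (m + 1 + 1 + 1) = (A * B ^ (m + 1 + 1)) * B := by
            rw [mul_assoc, ← pow_succ]
        _ = B ^ (m + 1 + 1) * (A * B) + (m + 1 + 1) • (C * (B ^ (m + 1) * B))
              - (m + 1 + 1).choose 2 • (G * (B ^ m * B)) := by
            rw [ih, sub_mul, add_mul, mul_assoc, smul_mul_assoc, mul_assoc,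
              smul_mul_assoc, mul_assoc]
        _ = B ^ (m + 1 + 1) * (B * A) + B ^ (m + 1 + 1) * C
              + (m + 1 + 1) • (C * B ^ (m + 1 + 1))
              - (m + 1 + 1).choose 2 • (G * B ^ (m + 1)) := by
            rw [hAB, mul_add, ← pow_succ, ← pow_succ]
        _ = B ^ (m + 1 + 1 + 1) * A
              + (C * B ^ (m + 1 + 1) - (m + 1 + 1) • (G * B ^ (m + 1)))
              + (m + 1 + 1) • (C * B ^ (m + 1 + 1))
              - (m + 1 + 1).choose 2 • (G * B ^ (m + 1)) := by
            rw [← mul_assoc, ← pow_succ, stmt7_CB hbc hbg (m + 1)]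
        _ = B ^ (m + 1 + 1 + 1) * A + (m + 1 + 1 + 1) • (C * B ^ (m + 1 + 1))
              - (m + 1 + 1 + 1).choose 2 • (G * B ^ (m + 1 + 1 - 1)) := by
            have h1 : m + 1 + 1 - 1 = m + 1 := by omega
            rw [h1, hch, add_smul]
            module

end Aux

theorem stmt_7 {K : Type*} [Field K] [CharZero K]
    {L : Type*} [LieRing L] [LieAlgebra K L]
    (a b c d g : L)
    (hab : ⁅a, b⁆ = c) (hac : ⁅a, c⁆ = d) (had : ⁅a, d⁆ = g) (hbc : ⁅b, c⁆ = -g)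
    (hag : ⁅a, g⁆ = 0) (hbd : ⁅b, d⁆ = 0) (hbg : ⁅b, g⁆ = 0) (hcd : ⁅c, d⁆ = 0) (hcg : ⁅c, g⁆ = 0) (hdg : ⁅d, g⁆ = 0)
    (u : ℕ) (hu : 1 ≤ u) :
    (ι K a : UniversalEnvelopingAlgebra K L) ^ (1) * (ι K b : UniversalEnvelopingAlgebra K L) ^ (u) =
      (ι K b : UniversalEnvelopingAlgebra K L) ^ (u) * (ι K a : UniversalEnvelopingAlgebra K L) ^ (1)
      + ((u : K)) • ((ι K c : UniversalEnvelopingAlgebra K L) ^ (1) * (ι K b : UniversalEnvelopingAlgebra K L) ^ (u - 1))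
      - ((u.choose 2 : ℕ) : K) • ((ι K g : UniversalEnvelopingAlgebra K L) ^ (1) * (ι K b : UniversalEnvelopingAlgebra K L) ^ (u - 2)) := by
  obtain ⟨n, rfl⟩ : ∃ n, u = n + 1 := ⟨u - 1, by omega⟩
  simp only [pow_one]
  have h1 : n + 1 - 1 = n := by omega
  have h2 : n + 1 - 2 = n - 1 := by omega
  rw [h1, h2, Nat.cast_smul_eq_nsmul, Nat.cast_smul_eq_nsmul]
  exact_mod_cast stmt7_AB hab hbc hbg n
end

section
/- Let L be a Lie algebra over a field of characteristic zero with elements x_1, x_2, x_3, x_4 such that [x_4,x_2] = -x_1 and [x_4,x_3] = -x_2, and all other brackets among x_1, x_2, x_3, x_4 are 0 (the Lie algebra 𝔫_{4,1}). Then for all nonnegative integers j, k, l, m, n, p, q, r, in the universal enveloping algebra U(L) one has (x_1^j x_2^k x_3^l x_4^m)(x_1^n x_2^p x_3^q x_4^r) = \sum_{\alpha=0}^{\min\{m,p\}} \sum_{\beta_1,\beta_2 \ge 0,\ \beta_1+\beta_2 \le q,\ \beta_1+2\beta_2 \le m-\alpha} \binom{m}{\alpha} \binom{p}{\alpha} \binom{q}{\beta_1+\beta_2}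 \binom{m-\alpha}{\beta_1+2\beta_2} \binom{\beta_1+\beta_2}{\beta_1} \alpha! \frac{(\beta_1+2\beta_2)!}{2^{\beta_2}} (-1)^{\alpha+\beta_1} \, x_1^{j+n+\alpha+\beta_2} x_2^{k+p-\alpha+\beta_1} x_3^{l+q-\beta_1-\beta_2} x_4^{m+r-\alpha-\beta_1-2\beta_2}. -/
open UniversalEnvelopingAlgebra

private lemma two_mul_choose_two (n : ℕ) : 2 * n.choose 2 = n * (n - 1) := by
  induction n with
  | zero => rfl
  | succ k ih =>
    rw [Nat.choose_succ_succ k 1, Nat.mul_add, ih, Nat.choose_one_right]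
    rcases k with _ | k' <;> [rfl; (simp; ring)]

private def Fc (K : Type*) [Field K] (M q β1 β2 : ℕ) : K :=
  (-1 : K) ^ β1 *
    ((q.choose (β1 + β2) * M.choose (β1 + 2 * β2) * (β1 + β2).choose β1
      * (β1 + 2 * β2).factorial : ℕ) : K) / 2 ^ β2

private def K2c (K : Type*) [Field K] (M q : ℕ) : ℕ → ℕ → K
  | 0, _ => 0
  | (b + 1), β2 => -(((M - b - 2 * β2 : ℕ) : K) * Fc K M q b β2)

private def K3c (K : Type*) [Field K] (M q : ℕ) : ℕ → ℕ → K
  | _, 0 => 0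
  | β1, (c + 1) => (((M - β1 - 2 * c).choose 2 : ℕ) : K) * Fc K M q β1 c

section
variable {A₀ : Type*} [Ring A₀]

private lemma comm_shift (x y w : A₀) (h : Commute x y) : x * (y * w) = y * (x * w) := by
  rw [← mul_assoc, h.eq, mul_assoc]

private lemma mergeMono2 (a b c : A₀) (hab : Commute a b) (hac : Commute a c) (hbc : Commute b c)
    (i1 j1 i2 j2 k2 : ℕ) (D : A₀) :
    (a ^ i1 * b ^ j1) * (a ^ i2 * b ^ j2 * c ^ k2 * D)
      = a ^ (i1 + i2) * b ^ (j1 + j2) * c ^ k2 * D := by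
  have h2 : Commute (b ^ j1) (a ^ i2) := (hab.symm.pow_pow _ _)
  simp only [mul_assoc]
  rw [comm_shift (b ^ j1) (a ^ i2) _ h2,
    ← mul_assoc (a ^ i1) (a ^ i2), ← pow_add,
    ← mul_assoc (b ^ j1) (b ^ j2), ← pow_add]

private lemma mergeMono3 (a b c : A₀) (hab : Commute a b) (hac : Commute a c) (hbc : Commute b c)
    (i1 j1 k1 i2 j2 k2 : ℕ) (D : A₀) :
    (a ^ i1 * b ^ j1 * c ^ k1) * (a ^ i2 * b ^ j2 * c ^ k2 * D)
      = a ^ (i1 + i2) * b ^ (j1 + j2) * c ^ (k1 + k2) * D := by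
  have h1 : Commute (c ^ k1) (a ^ i2) := (hac.symm.pow_pow _ _)
  have h2 : Commute (b ^ j1) (a ^ i2) := (hab.symm.pow_pow _ _)
  have h3 : Commute (c ^ k1) (b ^ j2) := (hbc.symm.pow_pow _ _)
  simp only [mul_assoc]
  rw [comm_shift (c ^ k1) (a ^ i2) _ h1, comm_shift (b ^ j1) (a ^ i2) _ h2,
    ← mul_assoc (a ^ i1) (a ^ i2), ← pow_add,
    comm_shift (c ^ k1) (b ^ j2) _ h3,
    ← mul_assoc (b ^ j1) (b ^ j2), ← pow_add,
    ← mul_assoc (c ^ k1) (c ^ k2), ← pow_add]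
end

section
variable {K : Type*} [Field K] [CharZero K] {A : Type*} [Ring A] [Algebra K A]

private lemma aux_dbn (a b d : A) (hab : Commute a b) (hdb : d * b = b * d - a) :
    ∀ nn : ℕ, d * b ^ nn = b ^ nn * d - (nn : K) • (a * b ^ (nn - 1)) := by
  intro nn
  induction nn with
  | zero => simp
  | succ n ih =>
    rcases n with _ | k
    · simpa using hdb
    · rw [pow_succ, ← mul_assoc, ih, sub_mul, mul_assoc _ d b, hdb, mul_sub,
        smul_mul_assoc, mul_assoc, ← pow_succ]
      have h1 : b ^ (k + 1) * a = a * b ^ (k + 1) := (hab.pow_right (k + 1)).symm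
      rw [Nat.add_sub_cancel, Nat.add_sub_cancel, h1]
      rw [← mul_assoc]
      push_cast
      module

private lemma aux_dnb (a b d : A) (had : Commute a d) (hdb : d * b = b * d - a) :
    ∀ nn : ℕ, d ^ nn * b = b * d ^ nn - (nn : K) • (a * d ^ (nn - 1)) := by
  intro nn
  induction nn with
  | zero => simp
  | succ n ih =>
    rcases n with _ | k
    · simpa using hdb
    · rw [pow_succ, mul_assoc, hdb, mul_sub, ← mul_assoc, ih, sub_mul,
        mul_assoc, ← pow_succ, Nat.add_sub_cancel, Nat.add_sub_cancel,
        smul_mul_assoc, mul_assoc, ← pow_succ]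
      have h1 : d ^ (k + 1) * a = a * d ^ (k + 1) := (had.pow_right (k + 1)).symm
      rw [h1]; push_cast; module

private lemma aux_dnc (a b c d : A) (had : Commute a d) (hdb : d * b = b * d - a)
    (hdc : d * c = c * d - b) :
    ∀ nn : ℕ, d ^ nn * c = c * d ^ nn - (nn : K) • (b * d ^ (nn - 1))
      + ((nn.choose 2 : ℕ) : K) • (a * d ^ (nn - 2)) := by
  intro nn
  induction nn with
  | zero => simp
  | succ n ih =>
    rcases n with _ | k
    · simpa using hdc
    · have hb := aux_dnb (K := K) a b d had hdb (k + 1)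
      rw [pow_succ, mul_assoc, hdc, mul_sub, ← mul_assoc, ih, add_mul, sub_mul,
        mul_assoc c _ d, ← pow_succ, smul_mul_assoc, smul_mul_assoc, hb]
      have e1 : k + 1 - 1 = k := by omega
      have e2 : k + 1 + 1 - 1 = k + 1 := by omega
      have e3 : k + 1 + 1 - 2 = k := by omega
      rw [e1, e2, e3, mul_assoc b _ d, ← pow_succ]
      have hch : (((k + 1 + 1).choose 2 : ℕ) : K) = ((k + 1).choose 2 : ℕ) + ((k + 1 : ℕ) : K) := by
        rw [Nat.choose_succ_succ (k + 1) 1]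
        push_cast [Nat.choose_one_right]
        ring
      rw [hch]
      rcases k with _ | k'
      · norm_num
        module
      · rw [show k' + 1 + 1 - 2 = k' from by omega, mul_assoc a _ d, ← pow_succ]
        push_cast
        module
private lemma lemCcoef (m p t : ℕ) :
    ((-1 : K) ^ (t+1) * ((m.choose (t+1) * (p+1).choose (t+1) * (t+1).factorial : ℕ) : K))
    = (-1 : K) ^ (t+1) * ((m.choose (t+1) * p.choose (t+1) * (t+1).factorial : ℕ) : K)
      - ((m - t : ℕ) : K) * ((-1 : K) ^ t * ((m.choose t * p.choose t * t.factorial : ℕ) : K)) := by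
  have hP : (((p+1).choose (t+1) : ℕ) : K) = (p.choose t : K) + (p.choose (t+1) : K) := by
    exact_mod_cast congrArg (Nat.cast : ℕ → K) (Nat.choose_succ_succ p t)
  have hR : ((m.choose (t+1) : ℕ) : K) * ((t+1 : ℕ) : K) = (m.choose t : K) * ((m - t : ℕ) : K) := by
    exact_mod_cast congrArg (Nat.cast : ℕ → K) (Nat.choose_succ_right_eq m t)
  have hF : (((t+1).factorial : ℕ) : K) = ((t+1 : ℕ) : K) * (t.factorial : K) := by
    exact_mod_cast congrArg (Nat.cast : ℕ → K) (Nat.factorial_succ t)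
  push_cast
  push_cast at hP hR hF
  linear_combination ((-1 : K) ^ (t+1) * (m.choose (t+1) : K) * ((t+1).factorial : K)) * hP
    + ((-1 : K) ^ (t+1) * (p.choose t : K) * (t.factorial : K)) * hR
    + ((-1 : K) ^ (t+1) * (m.choose (t+1) : K) * (p.choose t : K)) * hF

private lemma lemC (a b d : A) (hab : Commute a b) (had : Commute a d) (hdb : d * b = b * d - a) (m : ℕ) :
    ∀ p : ℕ, d ^ m * b ^ p = ∑ α ∈ Finset.range (m + 1),
      ((-1 : K) ^ α * ((m.choose α * p.choose α * α.factorial : ℕ) : K)) •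
        (a ^ α * b ^ (p - α) * d ^ (m - α)) := by
  intro p
  induction p with
  | zero =>
    rw [Finset.sum_eq_single 0]
    · simp
    · intro α hα h0
      rcases α with _ | t
      · exact absurd rfl h0
      · simp [Nat.choose_succ_self_right]
    · intro h; simp at h
  | succ p ih =>
    have hterm : ∀ α ∈ Finset.range (m + 1),
        (((-1 : K) ^ α * ((m.choose α * p.choose α * α.factorial : ℕ) : K)) •
          (a ^ α * b ^ (p - α) * d ^ (m - α))) * b
        = ((-1 : K) ^ α * ((m.choose α * p.choose α * α.factorial : ℕ) : K)) •
            (a ^ α * b ^ (p + 1 - α) * d ^ (m - α))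
          - ((((m - α : ℕ)) : K) * ((-1 : K) ^ α * ((m.choose α * p.choose α * α.factorial : ℕ) : K))) •
            (a ^ (α + 1) * b ^ (p + 1 - (α + 1)) * d ^ (m - (α + 1))) := by
      intro α hα
      rw [smul_mul_assoc, mul_assoc (a ^ α * b ^ (p - α)) (d ^ (m - α)) b,
        aux_dnb (K := K) a b d had hdb (m - α), mul_sub, mul_smul_comm]
      have e1 : a ^ α * b ^ (p - α) * (b * d ^ (m - α)) = a ^ α * b ^ (p - α + 1) * d ^ (m - α) := by
        rw [← mul_assoc (a ^ α * b ^ (p - α)) b (d ^ (m - α)),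
          mul_assoc (a ^ α) (b ^ (p - α)) b, ← pow_succ]
      have e2 : a ^ α * b ^ (p - α) * (a * d ^ (m - α - 1))
          = a ^ (α + 1) * b ^ (p + 1 - (α + 1)) * d ^ (m - (α + 1)) := by
      -- move a left
        rw [Nat.succ_sub_succ, ← mul_assoc (a ^ α * b ^ (p - α)) a (d ^ (m - α - 1)),
          mul_assoc (a ^ α) (b ^ (p - α)) a,
          ((hab.pow_right (p - α)).symm.eq : b ^ (p - α) * a = a * b ^ (p - α)),
          ← mul_assoc (a ^ α) a (b ^ (p - α)), ← pow_succ,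
          show m - α - 1 = m - (α + 1) from by omega]
      rw [e1, e2, smul_sub, smul_smul]
      by_cases hle : α ≤ p
      · rw [show p - α + 1 = p + 1 - α from by omega]
        ring_nf
      · have hz : p.choose α = 0 := Nat.choose_eq_zero_of_lt (by omega)
        rw [hz]
        push_cast
        ring_nf
        simp
    rw [pow_succ, ← mul_assoc, ih, Finset.sum_mul, Finset.sum_congr rfl hterm,
      Finset.sum_sub_distrib]
    rw [Finset.sum_range_succ' (fun α => ((-1 : K) ^ α * ((m.choose α * p.choose α * α.factorial : ℕ) : K)) •
        (a ^ α * b ^ (p + 1 - α) * d ^ (m - α))) m]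
    rw [Finset.sum_range_succ (fun α => ((((m - α : ℕ)) : K) * ((-1 : K) ^ α * ((m.choose α * p.choose α * α.factorial : ℕ) : K))) •
        (a ^ (α + 1) * b ^ (p + 1 - (α + 1)) * d ^ (m - (α + 1)))) m]
    rw [Finset.sum_range_succ' (fun α => ((-1 : K) ^ α * ((m.choose α * (p+1).choose α * α.factorial : ℕ) : K)) •
        (a ^ α * b ^ (p + 1 - α) * d ^ (m - α))) m]
    rw [Nat.sub_self]
    simp only [Nat.cast_zero, zero_mul, zero_smul, add_zero]
    rw [add_sub_right_comm]
    congr 1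
    · rw [← Finset.sum_sub_distrib]
      refine Finset.sum_congr rfl fun t _ => ?_
      rw [← sub_smul, ← lemCcoef m p t]
    · norm_num
private lemma div_pow_succ_eq (x : K) (c : ℕ) : x / 2 ^ c = (2 * x) / 2 ^ (c + 1) := by
  rw [pow_succ, mul_comm ((2:K) ^ c) 2, ← div_div, mul_div_cancel_left₀ x (two_ne_zero' K)]

private lemma PIc (M q : ℕ) (β1 β2 : ℕ) :
    Fc K M (q + 1) β1 β2 = Fc K M q β1 β2 + K2c K M q β1 β2 + K3c K M q β1 β2 := by
  rcases β1 with _ | b <;> rcases β2 with _ | c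
  · simp [Fc, K2c, K3c]
  · -- β1 = 0, β2 = c+1
    simp only [Fc, K2c, K3c, Nat.zero_add, Nat.zero_sub, Nat.sub_zero, zero_add, add_zero,
      Nat.choose_zero_right, Nat.choose_self, pow_zero, one_mul]
    simp only [← mul_div_assoc]
    rw [div_pow_succ_eq _ c]
    simp only [← add_div]
    congr 1
    rw [show 2 * (c + 1) = 2 * c + 2 from by ring]
    have hPqn : (q+1).choose (c+1) = q.choose c + q.choose (c+1) := by
      exact Nat.choose_succ_succ q c
    have h1n : M.choose (2*c+2) * (2*c+2) = M.choose (2*c+1) * (M - (2*c+1)) := by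
      exact Nat.choose_succ_right_eq M (2*c+1)
    have h2n : M.choose (2*c+1) * (2*c+1) = M.choose (2*c) * (M - 2*c) := by
      exact Nat.choose_succ_right_eq M (2*c)
    have h3n : 2 * (M - 2*c).choose 2 = (M - 2*c) * (M - (2*c+1)) := by
      have := two_mul_choose_two (M - 2*c)
      have e : M - 2*c - 1 = M - (2*c+1) := by omega
      rw [e] at this; exact this
    have hf2n : (2*c+2).factorial = (2*c+2) * (2*c+1).factorial := by
      exact Nat.factorial_succ (2*c+1)
    have hf1n : (2*c+1).factorial = (2*c+1) * (2*c).factorial := by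
      exact Nat.factorial_succ (2*c)
    have hPq : (((q+1).choose (c+1) : ℕ) : K) = (q.choose c : K) + (q.choose (c+1) : K) := by
      exact_mod_cast hPqn
    have h1 : ((M.choose (2*c+2) : ℕ) : K) * ((2*c+2 : ℕ) : K)
        = ((M.choose (2*c+1) : ℕ) : K) * ((M - (2*c+1) : ℕ) : K) := by exact_mod_cast h1n
    have h2 : ((M.choose (2*c+1) : ℕ) : K) * ((2*c+1 : ℕ) : K)
        = ((M.choose (2*c) : ℕ) : K) * ((M - 2*c : ℕ) : K) := by exact_mod_cast h2n
    have h3 : 2 * (((M - 2*c).choose 2 : ℕ) : K)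
        = ((M - 2*c : ℕ) : K) * ((M - (2*c+1) : ℕ) : K) := by exact_mod_cast h3n
    have hf2 : (((2*c+2).factorial : ℕ) : K) = ((2*c+2 : ℕ) : K) * ((2*c+1).factorial : K) := by
      exact_mod_cast hf2n
    have hf1 : (((2*c+1).factorial : ℕ) : K) = ((2*c+1 : ℕ) : K) * ((2*c).factorial : K) := by
      exact_mod_cast hf1n
    push_cast
    push_cast at hPq h1 h2 h3 hf2 hf1
    linear_combination ((M.choose (2*c+2) : K) * ((2*c+2).factorial : K)) * hPq
      + ((q.choose c : K) * (M.choose (2*c+2) : K)) * hf2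
      + ((q.choose c : K) * ((2*c+1).factorial : K)) * h1
      + ((q.choose c : K) * ((M - (2*c+1) : ℕ) : K) * ((2*c).factorial : K)) * h2
      - ((q.choose c : K) * (M.choose (2*c) : K) * ((2*c).factorial : K)) * h3
      + ((q.choose c : K) * (M.choose (2*c+1) : K) * ((M - (2*c+1) : ℕ) : K)) * hf1
  · -- β1 = b+1, β2 = 0
    simp only [Fc, K2c, K3c, Nat.add_zero, Nat.mul_zero, Nat.sub_zero, pow_zero, div_one,
      add_zero, Nat.choose_self]
    have hPqn : (q+1).choose (b+1) = q.choose b + q.choose (b+1) := by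
      exact Nat.choose_succ_succ q b
    have h1n : M.choose (b+1) * (b+1) = M.choose b * (M - b) := Nat.choose_succ_right_eq M b
    have hfn : (b+1).factorial = (b+1) * b.factorial := Nat.factorial_succ b
    have hPq : (((q+1).choose (b+1) : ℕ) : K) = (q.choose b : K) + (q.choose (b+1) : K) := by
      exact_mod_cast hPqn
    have h1 : ((M.choose (b+1) : ℕ) : K) * ((b+1 : ℕ) : K)
        = ((M.choose b : ℕ) : K) * ((M - b : ℕ) : K) := by exact_mod_cast h1n
    have hf : (((b+1).factorial : ℕ) : K) = ((b+1 : ℕ) : K) * (b.factorial : K) := by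
      exact_mod_cast hfn
    push_cast
    push_cast at hPq h1 hf
    linear_combination ((-1 : K) ^ (b+1) * (M.choose (b+1) : K) * ((b+1).factorial : K)) * hPq
      + ((-1 : K) ^ (b+1) * (q.choose b : K) * (M.choose (b+1) : K)) * hf
      + ((-1 : K) ^ (b+1) * (q.choose b : K) * (b.factorial : K)) * h1
  · -- β1 = b+1, β2 = c+1 : main case
    simp only [Fc, K2c, K3c]
    rw [show b + 1 + (c + 1) = b + c + 2 from by ring,
      show b + 1 + 2 * (c + 1) = b + 2*c + 3 from by ring,
      show b + (c + 1) = b + c + 1 from by ring,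
      show b + 2 * (c + 1) = b + 2*c + 2 from by ring,
      show b + 1 + c = b + c + 1 from by ring,
      show b + 1 + 2 * c = b + 2*c + 1 from by ring,
      show M - b - 2 * (c + 1) = M - (b + 2*c + 2) from by omega,
      show M - (b + 1) - 2 * c = M - (b + 2*c + 1) from by omega]
    simp only [← mul_div_assoc, ← neg_div]
    rw [div_pow_succ_eq _ c]
    simp only [← add_div]
    congr 1
    have hPqn : (q+1).choose (b+c+2) = q.choose (b+c+1) + q.choose (b+c+2) := by
      exact Nat.choose_succ_succ q (b+c+1)
    have hPun : (b+c+2).choose (b+1) = (b+c+1).choose b + (b+c+1).choose (b+1) := by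
      exact Nat.choose_succ_succ (b+c+1) b
    have h1n : M.choose (b+2*c+3) * (b+2*c+3) = M.choose (b+2*c+2) * (M - (b+2*c+2)) := by
      exact Nat.choose_succ_right_eq M (b+2*c+2)
    have h2n : M.choose (b+2*c+2) * (b+2*c+2) = M.choose (b+2*c+1) * (M - (b+2*c+1)) := by
      exact Nat.choose_succ_right_eq M (b+2*c+1)
    have h3n : 2 * (M - (b+2*c+1)).choose 2 = (M - (b+2*c+1)) * (M - (b+2*c+2)) := by
      have := two_mul_choose_two (M - (b+2*c+1))
      have e : M - (b+2*c+1) - 1 = M - (b+2*c+2) := by omega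
      rw [e] at this; exact this
    have hf3n : (b+2*c+3).factorial = (b+2*c+3) * (b+2*c+2).factorial := by
      exact Nat.factorial_succ (b+2*c+2)
    have hf2n : (b+2*c+2).factorial = (b+2*c+2) * (b+2*c+1).factorial := by
      exact Nat.factorial_succ (b+2*c+1)
    have hPq : (((q+1).choose (b+c+2) : ℕ) : K) = (q.choose (b+c+1) : K) + (q.choose (b+c+2) : K) := by
      exact_mod_cast hPqn
    have hPu : (((b+c+2).choose (b+1) : ℕ) : K) = ((b+c+1).choose b : K) + ((b+c+1).choose (b+1) : K) := by
      exact_mod_cast hPun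
    have h1 : ((M.choose (b+2*c+3) : ℕ) : K) * ((b+2*c+3 : ℕ) : K)
        = ((M.choose (b+2*c+2) : ℕ) : K) * ((M - (b+2*c+2) : ℕ) : K) := by exact_mod_cast h1n
    have h2 : ((M.choose (b+2*c+2) : ℕ) : K) * ((b+2*c+2 : ℕ) : K)
        = ((M.choose (b+2*c+1) : ℕ) : K) * ((M - (b+2*c+1) : ℕ) : K) := by exact_mod_cast h2n
    have h3 : 2 * (((M - (b+2*c+1)).choose 2 : ℕ) : K)
        = ((M - (b+2*c+1) : ℕ) : K) * ((M - (b+2*c+2) : ℕ) : K) := by exact_mod_cast h3n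
    have hf3 : (((b+2*c+3).factorial : ℕ) : K) = ((b+2*c+3 : ℕ) : K) * ((b+2*c+2).factorial : K) := by
      exact_mod_cast hf3n
    have hf2 : (((b+2*c+2).factorial : ℕ) : K) = ((b+2*c+2 : ℕ) : K) * ((b+2*c+1).factorial : K) := by
      exact_mod_cast hf2n
    push_cast
    push_cast at hPq hPu h1 h2 h3 hf3 hf2
    linear_combination ((-1 : K) ^ (b+1) * (M.choose (b+2*c+3) : K) * (((b+c+2).choose (b+1) : ℕ) : K) * ((b+2*c+3).factorial : K)) * hPq
      + ((-1 : K) ^ (b+1) * (q.choose (b+c+1) : K) * (M.choose (b+2*c+3) : K) * ((b+2*c+3).factorial : K)) * hPu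
      + ((-1 : K) ^ (b+1) * (q.choose (b+c+1) : K) * (((b+c+1).choose b : K) + ((b+c+1).choose (b+1) : K)) * ((b+2*c+2).factorial : K)) * h1
      + ((-1 : K) ^ (b+1) * (q.choose (b+c+1) : K) * ((b+c+1).choose (b+1) : K) * ((M - (b+2*c+2) : ℕ) : K) * ((b+2*c+1).factorial : K)) * h2
      - ((-1 : K) ^ (b+1) * (q.choose (b+c+1) : K) * ((b+c+1).choose (b+1) : K) * (M.choose (b+2*c+1) : K) * ((b+2*c+1).factorial : K)) * h3
      + ((-1 : K) ^ (b+1) * (q.choose (b+c+1) : K) * (((b+c+1).choose b : K) + ((b+c+1).choose (b+1) : K)) * (M.choose (b+2*c+3) : K)) * hf3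
      + ((-1 : K) ^ (b+1) * (q.choose (b+c+1) : K) * ((b+c+1).choose (b+1) : K) * (M.choose (b+2*c+2) : K) * ((M - (b+2*c+2) : ℕ) : K)) * hf2

private lemma Fc_top (M q β1 β2 : ℕ) (h : q < β1 + β2) : Fc K M q β1 β2 = 0 := by
  simp [Fc, Nat.choose_eq_zero_of_lt h]

private lemma lemD (a b c d : A) (hab : Commute a b) (hac : Commute a c) (had : Commute a d)
    (hbc : Commute b c) (hdb : d * b = b * d - a) (hdc : d * c = c * d - b) (M : ℕ) :
    ∀ q : ℕ, d ^ M * c ^ q = ∑ β1 ∈ Finset.range (q + 1), ∑ β2 ∈ Finset.range (q + 1),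
      Fc K M q β1 β2 • (a ^ β2 * b ^ β1 * c ^ (q - β1 - β2) * d ^ (M - β1 - 2 * β2)) := by
  intro q
  induction q with
  | zero =>
    simp [Fc]
  | succ q ih =>
    have hterm : ∀ β1 β2 : ℕ,
        (Fc K M q β1 β2 • (a ^ β2 * b ^ β1 * c ^ (q - β1 - β2) * d ^ (M - β1 - 2 * β2))) * c
        = Fc K M q β1 β2 • (a ^ β2 * b ^ β1 * c ^ (q + 1 - β1 - β2) * d ^ (M - β1 - 2 * β2))
          + K2c K M q (β1 + 1) β2 •
            (a ^ β2 * b ^ (β1 + 1) * c ^ (q + 1 - (β1 + 1) - β2) * d ^ (M - (β1 + 1) - 2 * β2))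
          + K3c K M q β1 (β2 + 1) •
            (a ^ (β2 + 1) * b ^ β1 * c ^ (q + 1 - β1 - (β2 + 1)) * d ^ (M - β1 - 2 * (β2 + 1))) := by
      intro β1 β2
      by_cases hle : β1 + β2 ≤ q
      · have hK2 : K2c K M q (β1 + 1) β2 = -(((M - β1 - 2 * β2 : ℕ) : K) * Fc K M q β1 β2) := rfl
        have hK3 : K3c K M q β1 (β2 + 1) = (((M - β1 - 2 * β2).choose 2 : ℕ) : K) * Fc K M q β1 β2 := rfl
        rw [hK2, hK3, smul_mul_assoc,
          mul_assoc (a ^ β2 * b ^ β1 * c ^ (q - β1 - β2)) (d ^ (M - β1 - 2 * β2)) c,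
          aux_dnc (K := K) a b c d had hdb hdc (M - β1 - 2 * β2)]
        have A1 : a ^ β2 * b ^ β1 * c ^ (q - β1 - β2) * (c * d ^ (M - β1 - 2 * β2))
            = a ^ β2 * b ^ β1 * c ^ (q + 1 - β1 - β2) * d ^ (M - β1 - 2 * β2) := by
          rw [← mul_assoc (a ^ β2 * b ^ β1 * c ^ (q - β1 - β2)) c,
            mul_assoc (a ^ β2 * b ^ β1) (c ^ (q - β1 - β2)) c, ← pow_succ,
            show q - β1 - β2 + 1 = q + 1 - β1 - β2 from by omega]
        have A2 : a ^ β2 * b ^ β1 * c ^ (q - β1 - β2) * (b * d ^ (M - β1 - 2 * β2 - 1))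
            = a ^ β2 * b ^ (β1 + 1) * c ^ (q + 1 - (β1 + 1) - β2) * d ^ (M - (β1 + 1) - 2 * β2) := by
          rw [← mul_assoc (a ^ β2 * b ^ β1 * c ^ (q - β1 - β2)) b,
            mul_assoc (a ^ β2 * b ^ β1) (c ^ (q - β1 - β2)) b,
            ((hbc.pow_right (q - β1 - β2)).eq.symm
              : c ^ (q - β1 - β2) * b = b * c ^ (q - β1 - β2)),
            ← mul_assoc (a ^ β2 * b ^ β1) b, mul_assoc (a ^ β2) (b ^ β1) b, ← pow_succ,
            show q + 1 - (β1 + 1) - β2 = q - β1 - β2 from by omega,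
            show M - β1 - 2 * β2 - 1 = M - (β1 + 1) - 2 * β2 from by omega]
        have A3 : a ^ β2 * b ^ β1 * c ^ (q - β1 - β2) * (a * d ^ (M - β1 - 2 * β2 - 2))
            = a ^ (β2 + 1) * b ^ β1 * c ^ (q + 1 - β1 - (β2 + 1)) * d ^ (M - β1 - 2 * (β2 + 1)) := by
          rw [← mul_assoc (a ^ β2 * b ^ β1 * c ^ (q - β1 - β2)) a,
            mul_assoc (a ^ β2 * b ^ β1) (c ^ (q - β1 - β2)) a,
            ((hac.pow_right (q - β1 - β2)).eq.symm
              : c ^ (q - β1 - β2) * a = a * c ^ (q - β1 - β2)),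
            ← mul_assoc (a ^ β2 * b ^ β1) a, mul_assoc (a ^ β2) (b ^ β1) a,
            ((hab.pow_right β1).eq.symm : b ^ β1 * a = a * b ^ β1),
            ← mul_assoc (a ^ β2) a, ← pow_succ,
            show q + 1 - β1 - (β2 + 1) = q - β1 - β2 from by omega,
            show M - β1 - 2 * β2 - 2 = M - β1 - 2 * (β2 + 1) from by omega]
        rw [mul_add, mul_sub, mul_smul_comm, mul_smul_comm, A1, A2, A3]
        module
      · have hF0 : Fc K M q β1 β2 = 0 := Fc_top M q β1 β2 (by omega)
        have hK2 : K2c K M q (β1 + 1) β2 = -(((M - β1 - 2 * β2 : ℕ) : K) * Fc K M q β1 β2) := rfl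
        have hK3 : K3c K M q β1 (β2 + 1) = (((M - β1 - 2 * β2).choose 2 : ℕ) : K) * Fc K M q β1 β2 := rfl
        rw [hK2, hK3, hF0]
        simp
    have hsum : (∑ β1 ∈ Finset.range (q + 1), ∑ β2 ∈ Finset.range (q + 1),
        (Fc K M q β1 β2 • (a ^ β2 * b ^ β1 * c ^ (q - β1 - β2) * d ^ (M - β1 - 2 * β2))) * c)
        = ∑ β1 ∈ Finset.range (q + 1), ∑ β2 ∈ Finset.range (q + 1),
          (Fc K M q β1 β2 • (a ^ β2 * b ^ β1 * c ^ (q + 1 - β1 - β2) * d ^ (M - β1 - 2 * β2))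
          + K2c K M q (β1 + 1) β2 •
            (a ^ β2 * b ^ (β1 + 1) * c ^ (q + 1 - (β1 + 1) - β2) * d ^ (M - (β1 + 1) - 2 * β2))
          + K3c K M q β1 (β2 + 1) •
            (a ^ (β2 + 1) * b ^ β1 * c ^ (q + 1 - β1 - (β2 + 1)) * d ^ (M - β1 - 2 * (β2 + 1)))) :=
      Finset.sum_congr rfl fun β1 _ => Finset.sum_congr rfl fun β2 _ => hterm β1 β2
    rw [pow_succ, ← mul_assoc, ih, Finset.sum_mul]
    simp only [Finset.sum_mul]
    rw [hsum]
    simp only [Finset.sum_add_distrib]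
    have hsplit : (∑ β1 ∈ Finset.range (q + 2), ∑ β2 ∈ Finset.range (q + 2),
        Fc K M (q + 1) β1 β2 • (a ^ β2 * b ^ β1 * c ^ (q + 1 - β1 - β2) * d ^ (M - β1 - 2 * β2)))
        = (∑ β1 ∈ Finset.range (q + 2), ∑ β2 ∈ Finset.range (q + 2),
            Fc K M q β1 β2 • (a ^ β2 * b ^ β1 * c ^ (q + 1 - β1 - β2) * d ^ (M - β1 - 2 * β2)))
          + (∑ β1 ∈ Finset.range (q + 2), ∑ β2 ∈ Finset.range (q + 2),
            K2c K M q β1 β2 • (a ^ β2 * b ^ β1 * c ^ (q + 1 - β1 - β2) * d ^ (M - β1 - 2 * β2)))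
          + (∑ β1 ∈ Finset.range (q + 2), ∑ β2 ∈ Finset.range (q + 2),
            K3c K M q β1 β2 • (a ^ β2 * b ^ β1 * c ^ (q + 1 - β1 - β2) * d ^ (M - β1 - 2 * β2))) := by
      rw [Finset.sum_congr rfl fun β1 (_ : β1 ∈ Finset.range (q + 2)) =>
        Finset.sum_congr rfl fun β2 (_ : β2 ∈ Finset.range (q + 2)) => by
          rw [PIc M q β1 β2, add_smul, add_smul]]
      simp only [Finset.sum_add_distrib]
    rw [show q + 1 + 1 = q + 2 from rfl, hsplit]
    have hA : (∑ β1 ∈ Finset.range (q + 2), ∑ β2 ∈ Finset.range (q + 2),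
        Fc K M q β1 β2 • (a ^ β2 * b ^ β1 * c ^ (q + 1 - β1 - β2) * d ^ (M - β1 - 2 * β2)))
        = ∑ β1 ∈ Finset.range (q + 1), ∑ β2 ∈ Finset.range (q + 1),
          Fc K M q β1 β2 • (a ^ β2 * b ^ β1 * c ^ (q + 1 - β1 - β2) * d ^ (M - β1 - 2 * β2)) := by
      rw [Finset.sum_range_succ]
      have hrow : (∑ β2 ∈ Finset.range (q + 2),
          Fc K M q (q + 1) β2 • (a ^ β2 * b ^ (q + 1) * c ^ (q + 1 - (q + 1) - β2) * d ^ (M - (q + 1) - 2 * β2))) = 0 :=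
        Finset.sum_eq_zero fun β2 _ => by rw [Fc_top M q (q + 1) β2 (by omega), zero_smul]
      rw [hrow, add_zero]
      refine Finset.sum_congr rfl fun β1 hβ1 => ?_
      rw [Finset.sum_range_succ, Fc_top M q β1 (q + 1) (by omega), zero_smul, add_zero]
    have hB : (∑ β1 ∈ Finset.range (q + 2), ∑ β2 ∈ Finset.range (q + 2),
        K2c K M q β1 β2 • (a ^ β2 * b ^ β1 * c ^ (q + 1 - β1 - β2) * d ^ (M - β1 - 2 * β2)))
        = ∑ β1 ∈ Finset.range (q + 1), ∑ β2 ∈ Finset.range (q + 1),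
          K2c K M q (β1 + 1) β2 •
            (a ^ β2 * b ^ (β1 + 1) * c ^ (q + 1 - (β1 + 1) - β2) * d ^ (M - (β1 + 1) - 2 * β2)) := by
      rw [Finset.sum_range_succ' (fun β1 => ∑ β2 ∈ Finset.range (q + 2),
        K2c K M q β1 β2 • (a ^ β2 * b ^ β1 * c ^ (q + 1 - β1 - β2) * d ^ (M - β1 - 2 * β2))) (q + 1)]
      have h0 : (∑ β2 ∈ Finset.range (q + 2),
          K2c K M q 0 β2 • (a ^ β2 * b ^ 0 * c ^ (q + 1 - 0 - β2) * d ^ (M - 0 - 2 * β2))) = 0 :=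
        Finset.sum_eq_zero fun β2 _ => by rw [show K2c K M q 0 β2 = 0 from rfl, zero_smul]
      rw [h0, add_zero]
      refine Finset.sum_congr rfl fun γ hγ => ?_
      rw [Finset.sum_range_succ]
      have hlast : K2c K M q (γ + 1) (q + 1) •
          (a ^ (q + 1) * b ^ (γ + 1) * c ^ (q + 1 - (γ + 1) - (q + 1)) * d ^ (M - (γ + 1) - 2 * (q + 1))) = 0 := by
        rw [show K2c K M q (γ + 1) (q + 1)
            = -(((M - γ - 2 * (q + 1) : ℕ) : K) * Fc K M q γ (q + 1)) from rfl,
          Fc_top M q γ (q + 1) (by omega)]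
        simp
      rw [hlast, add_zero]
    have hC : (∑ β1 ∈ Finset.range (q + 2), ∑ β2 ∈ Finset.range (q + 2),
        K3c K M q β1 β2 • (a ^ β2 * b ^ β1 * c ^ (q + 1 - β1 - β2) * d ^ (M - β1 - 2 * β2)))
        = ∑ β1 ∈ Finset.range (q + 1), ∑ β2 ∈ Finset.range (q + 1),
          K3c K M q β1 (β2 + 1) •
            (a ^ (β2 + 1) * b ^ β1 * c ^ (q + 1 - β1 - (β2 + 1)) * d ^ (M - β1 - 2 * (β2 + 1))) := by
      rw [Finset.sum_range_succ]
      have hrow : (∑ β2 ∈ Finset.range (q + 2),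
          K3c K M q (q + 1) β2 • (a ^ β2 * b ^ (q + 1) * c ^ (q + 1 - (q + 1) - β2) * d ^ (M - (q + 1) - 2 * β2))) = 0 :=
        Finset.sum_eq_zero fun β2 _ => by
          rcases β2 with _ | γ
          · rw [show K3c K M q (q + 1) 0 = 0 from rfl, zero_smul]
          · rw [show K3c K M q (q + 1) (γ + 1)
                = (((M - (q + 1) - 2 * γ).choose 2 : ℕ) : K) * Fc K M q (q + 1) γ from rfl,
              Fc_top M q (q + 1) γ (by omega)]
            simp
      rw [hrow, add_zero]
      refine Finset.sum_congr rfl fun β1 hβ1 => ?_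
      rw [Finset.sum_range_succ' (fun β2 =>
        K3c K M q β1 β2 • (a ^ β2 * b ^ β1 * c ^ (q + 1 - β1 - β2) * d ^ (M - β1 - 2 * β2))) (q + 1)]
      rw [show K3c K M q β1 0 = 0 from rfl, zero_smul, add_zero]
    rw [hA, hB, hC]

private lemma Fc_top2 (M q β1 β2 : ℕ) (h : M < β1 + 2 * β2) : Fc K M q β1 β2 = 0 := by
  simp [Fc, Nat.choose_eq_zero_of_lt h]

private lemma mainCalc (a b c d : A) (hab : Commute a b) (hac : Commute a c)
    (had : Commute a d) (hbc : Commute b c)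
    (hdb : d * b = b * d - a) (hdc : d * c = c * d - b)
    (j k l m n p q r : ℕ) :
    (a ^ j * b ^ k * c ^ l * d ^ m) * (a ^ n * b ^ p * c ^ q * d ^ r)
      = ∑ α ∈ Finset.range (min m p + 1), ∑ β1 ∈ Finset.range (q + 1), ∑ β2 ∈ Finset.range (q + 1),
        if β1 + β2 ≤ q ∧ β1 + 2 * β2 ≤ m - α then
          ((-1 : K) ^ (α + β1) *
            ((m.choose α * p.choose α * q.choose (β1 + β2) * (m - α).choose (β1 + 2 * β2)
              * (β1 + β2).choose β1 * α.factorial * (β1 + 2 * β2).factorial : ℕ) : K)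
            / 2 ^ β2) •
          (a ^ (j + n + α + β2) * b ^ (k + p - α + β1) * c ^ (l + q - β1 - β2)
            * d ^ (m + r - α - β1 - 2 * β2))
        else 0 := by
  have hE0 : (a ^ j * b ^ k * c ^ l * d ^ m) * (a ^ n * b ^ p * c ^ q * d ^ r)
      = (a ^ (j + n) * b ^ k * c ^ l) * ((d ^ m * b ^ p) * (c ^ q * d ^ r)) := by
    have h1 : Commute (d ^ m) (a ^ n) := (had.symm.pow_pow _ _)
    have h2 : Commute (c ^ l) (a ^ n) := (hac.symm.pow_pow _ _)
    have h3 : Commute (b ^ k) (a ^ n) := (hab.symm.pow_pow _ _)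
    simp only [mul_assoc]
    rw [comm_shift (d ^ m) (a ^ n) _ h1, comm_shift (c ^ l) (a ^ n) _ h2,
      comm_shift (b ^ k) (a ^ n) _ h3, ← mul_assoc (a ^ j) (a ^ n), ← pow_add]
  rw [hE0, lemC (K := K) a b d hab had hdb m p, Finset.sum_mul, Finset.mul_sum]
  have h1 : ∀ α ∈ Finset.range (m + 1),
      (a ^ (j + n) * b ^ k * c ^ l) *
        (((((-1 : K) ^ α * ((m.choose α * p.choose α * α.factorial : ℕ) : K)) •
           (a ^ α * b ^ (p - α) * d ^ (m - α)))) * (c ^ q * d ^ r))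
      = ∑ β1 ∈ Finset.range (q + 1), ∑ β2 ∈ Finset.range (q + 1),
          (((-1 : K) ^ α * ((m.choose α * p.choose α * α.factorial : ℕ) : K))
            * Fc K (m - α) q β1 β2) •
          (a ^ ((j + n) + (α + β2)) * b ^ (k + ((p - α) + β1)) * c ^ (l + (q - β1 - β2))
            * d ^ (((m - α) - β1 - 2 * β2) + r)) := by
    intro α hα
    rw [smul_mul_assoc, mul_smul_comm,
      mul_assoc (a ^ α * b ^ (p - α)) (d ^ (m - α)) (c ^ q * d ^ r),
      ← mul_assoc (d ^ (m - α)) (c ^ q) (d ^ r),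
      lemD (K := K) a b c d hab hac had hbc hdb hdc (m - α) q]
    simp only [Finset.sum_mul, Finset.mul_sum, Finset.smul_sum]
    refine Finset.sum_congr rfl fun β1 _ => Finset.sum_congr rfl fun β2 _ => ?_
    rw [smul_mul_assoc,
      mul_assoc (a ^ β2 * b ^ β1 * c ^ (q - β1 - β2)) (d ^ ((m - α) - β1 - 2 * β2)) (d ^ r),
      ← pow_add, mul_smul_comm, mul_smul_comm, smul_smul,
      mergeMono2 a b c hab hac hbc α (p - α) β2 β1 (q - β1 - β2) _,
      mergeMono3 a b c hab hac hbc (j + n) k l (α + β2) ((p - α) + β1) (q - β1 - β2) _]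
  rw [Finset.sum_congr rfl h1]
  have hsub : Finset.range (min m p + 1) ⊆ Finset.range (m + 1) :=
    Finset.range_subset_range.mpr (by omega)
  rw [← Finset.sum_subset hsub (fun α hα1 hα2 => ?_)]
  swap
  · -- vanishing terms for α > min m p
    have hp : p < α := by
      simp only [Finset.mem_range] at hα1 hα2
      omega
    refine Finset.sum_eq_zero fun β1 _ => Finset.sum_eq_zero fun β2 _ => ?_
    rw [Nat.choose_eq_zero_of_lt hp]
    simp
  refine Finset.sum_congr rfl fun α hα => Finset.sum_congr rfl fun β1 hβ1 =>
    Finset.sum_congr rfl fun β2 hβ2 => ?_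
  simp only [Finset.mem_range] at hα hβ1 hβ2
  by_cases hc : β1 + β2 ≤ q ∧ β1 + 2 * β2 ≤ m - α
  · rw [if_pos hc]
    rw [show (j + n) + (α + β2) = j + n + α + β2 from by omega,
      show k + ((p - α) + β1) = k + p - α + β1 from by omega,
      show l + (q - β1 - β2) = l + q - β1 - β2 from by omega,
      show ((m - α) - β1 - 2 * β2) + r = m + r - α - β1 - 2 * β2 from by omega]
    congr 1
    simp only [Fc]
    push_cast
    ring
  · rw [if_neg hc]
    have hz : Fc K (m - α) q β1 β2 = 0 := by
      rcases not_and_or.mp hc with h | h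
      · exact Fc_top _ _ _ _ (by omega)
      · exact Fc_top2 _ _ _ _ (by omega)
    rw [hz, mul_zero, zero_smul]
end

theorem stmt_10 {K : Type*} [Field K] [CharZero K]
    {L : Type*} [LieRing L] [LieAlgebra K L]
    (x1 x2 x3 x4 : L)
    (h42 : ⁅x4, x2⁆ = -x1) (h43 : ⁅x4, x3⁆ = -x2)
    (h12 : ⁅x1, x2⁆ = 0) (h13 : ⁅x1, x3⁆ = 0) (h14 : ⁅x1, x4⁆ = 0) (h23 : ⁅x2, x3⁆ = 0)
    (j k l m n p q r : ℕ) :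
    ((ι K x1 : UniversalEnvelopingAlgebra K L) ^ (j) * (ι K x2 : UniversalEnvelopingAlgebra K L) ^ (k) * (ι K x3 : UniversalEnvelopingAlgebra K L) ^ (l) * (ι K x4 : UniversalEnvelopingAlgebra K L) ^ (m))
      * ((ι K x1 : UniversalEnvelopingAlgebra K L) ^ (n) * (ι K x2 : UniversalEnvelopingAlgebra K L) ^ (p) * (ι K x3 : UniversalEnvelopingAlgebra K L) ^ (q) * (ι K x4 : UniversalEnvelopingAlgebra K L) ^ (r)) =
      ∑ α ∈ Finset.range (min m p + 1),
      ∑ β1 ∈ Finset.range (q + 1), ∑ β2 ∈ Finset.range (q + 1),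
        if β1 + β2 ≤ q ∧ β1 + 2 * β2 ≤ m - α then
          ((-1 : K) ^ (α + β1) *
            ((m.choose α * p.choose α * q.choose (β1 + β2) * (m - α).choose (β1 + 2 * β2)
              * (β1 + β2).choose β1 * α.factorial * (β1 + 2 * β2).factorial : ℕ) : K)
            / 2 ^ β2) •
            ((ι K x1 : UniversalEnvelopingAlgebra K L) ^ (j + n + α + β2) * (ι K x2 : UniversalEnvelopingAlgebra K L) ^ (k + p - α + β1)
              * (ι K x3 : UniversalEnvelopingAlgebra K L) ^ (l + q - β1 - β2) * (ι K x4 : UniversalEnvelopingAlgebra K L) ^ (m + r - α - β1 - 2 * β2))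
        else 0 := by
  have key : ∀ u v : L, (ι K ⁅u, v⁆ : UniversalEnvelopingAlgebra K L)
      = ι K u * ι K v - ι K v * ι K u := fun u v => by
    letI : LieRing (UniversalEnvelopingAlgebra K L) := LieRing.ofAssociativeRing
    exact (LieHom.map_lie (ι K) u v).trans rfl
  have hab : Commute (ι K x1 : UniversalEnvelopingAlgebra K L) (ι K x2) := by
    have h := key x1 x2
    rw [h12, map_zero] at h
    exact sub_eq_zero.mp h.symm
  have hac : Commute (ι K x1 : UniversalEnvelopingAlgebra K L) (ι K x3) := by
    have h := key x1 x3
    rw [h13, map_zero] at h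
    exact sub_eq_zero.mp h.symm
  have had : Commute (ι K x1 : UniversalEnvelopingAlgebra K L) (ι K x4) := by
    have h := key x1 x4
    rw [h14, map_zero] at h
    exact sub_eq_zero.mp h.symm
  have hbc : Commute (ι K x2 : UniversalEnvelopingAlgebra K L) (ι K x3) := by
    have h := key x2 x3
    rw [h23, map_zero] at h
    exact sub_eq_zero.mp h.symm
  have hdb : (ι K x4 : UniversalEnvelopingAlgebra K L) * ι K x2 = ι K x2 * ι K x4 - ι K x1 := by
    have h := key x4 x2
    rw [h42, map_neg] at h
    have h2 := sub_eq_iff_eq_add.mp h.symm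
    rw [h2]; abel
  have hdc : (ι K x4 : UniversalEnvelopingAlgebra K L) * ι K x3 = ι K x3 * ι K x4 - ι K x2 := by
    have h := key x4 x3
    rw [h43, map_neg] at h
    have h2 := sub_eq_iff_eq_add.mp h.symm
    rw [h2]; abel
  exact mainCalc (ι K x1) (ι K x2) (ι K x3) (ι K x4) hab hac had hbc hdb hdc j k l m n p q r
end

section
/- Let L be a Lie algebra over a field of characteristic zero with elements x_1, x_2, x_3, x_4, x_5 such that [x_5,x_3] = -x_1 and [x_5,x_4] = -x_2, and all other brackets among x_1, ..., x_5 are 0 (the Lie algebra 𝔫_{5,1}). Then for all nonnegative integers j, k, l, m, n, p, q, r, s, t, in the universal enveloping algebra U(L) one has (x_1^j x_2^k x_3^l x_4^m x_5^n)(x_1^p x_2^q x_3^r x_4^s x_5^t) = \sum_{\alpha=0}^{\min\{n,r\}} \sum_{\beta=0}^{\min\{n-\alpha,s\}} \binom{n}{\alpha} \binom{r}{\alpha} \binom{n-\alpha}{\beta} \binom{s}{\beta} \alpha! \beta! (-1)^{\alpha+\beta} \, x_1^{j+p+\alpha} x_2^{k+q+\beta} x_3^{l+r-\alpha} x_4^{m+s-\beta}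 x_5^{n+t-\alpha-\beta}. -/
open UniversalEnvelopingAlgebra

section Aux
variable {R : Type*} [Ring R]

private lemma aux1 (e c a : R) (h : e * c = c * e + a) (hac : a * c = c * a) :
    ∀ m : ℕ, e * c ^ m = c ^ m * e + m • (c ^ (m - 1) * a) := by
  intro m
  induction m with
  | zero => simp
  | succ m ih =>
    have key : (m : ℕ) • (c ^ (m - 1) * a * c) = m • (c ^ m * a) := by
      cases m with
      | zero => simp
      | succ m' =>
        congr 1
        rw [mul_assoc, hac, ← mul_assoc, ← pow_succ]
        simp
    calc e * c ^ (m + 1) = (e * c ^ m) * c := by rw [pow_succ, ← mul_assoc]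
      _ = (c ^ m * e + m • (c ^ (m - 1) * a)) * c := by rw [ih]
      _ = c ^ m * (e * c) + m • (c ^ (m - 1) * a * c) := by
          rw [add_mul, mul_assoc, smul_mul_assoc]
      _ = c ^ m * (c * e) + c ^ m * a + m • (c ^ m * a) := by
          rw [h, mul_add, key, add_assoc]
      _ = c ^ (m + 1) * e + (m + 1) • (c ^ (m + 1 - 1) * a) := by
          rw [← mul_assoc, ← pow_succ, succ_nsmul]
          simp only [Nat.add_sub_cancel]
          abel

private lemma coef_id (r n α : ℕ) :
    n.choose (α+1) * r.choose (α+1) * (α+1).factorial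
      + n.choose α * r.choose α * α.factorial * (r - α)
    = (n+1).choose (α+1) * r.choose (α+1) * (α+1).factorial := by
  have h2 : r.choose α * α.factorial * (r - α) = r.choose (α+1) * (α+1).factorial := by
    rw [mul_right_comm, Nat.factorial_succ, ← mul_assoc, Nat.choose_succ_right_eq]
  have h3 : n.choose α * r.choose α * α.factorial * (r - α)
      = n.choose α * (r.choose (α+1) * (α+1).factorial) := by
    rw [← h2]; ring
  rw [Nat.choose_succ_succ, add_mul, add_mul, h3, add_comm]
  ring

private lemma aux2 (e c a : R) (h : e * c = c * e + a) (hac : a * c = c * a) (hae : a * e = e * a)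
    (r : ℕ) : ∀ n : ℕ, e ^ n * c ^ r = ∑ α ∈ Finset.range (n+1),
      (n.choose α * r.choose α * α.factorial) • (a ^ α * c ^ (r - α) * e ^ (n - α)) := by
  intro n
  induction n with
  | zero => simp
  | succ n ih =>
    have hCea : Commute e a := hae.symm
    have hCac : Commute a c := hac
    have key : ∀ α, α ≤ n → e * (a ^ α * c ^ (r - α) * e ^ (n - α)) =
        a ^ α * c ^ (r - α) * e ^ (n + 1 - α)
          + (r - α) • (a ^ (α+1) * c ^ (r - (α+1)) * e ^ (n + 1 - (α+1))) := by
      intro α hα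
      have h1 : e * a ^ α = a ^ α * e := (hCea.pow_right α).eq
      have h4 : c ^ (r - α - 1) * a = a * c ^ (r - α - 1) :=
        ((hCac.pow_right (r - α - 1)).eq).symm
      have e1 : n + 1 - α = (n - α) + 1 := by omega
      have e2 : n + 1 - (α + 1) = n - α := by omega
      have e3 : r - (α + 1) = r - α - 1 := by omega
      calc e * (a ^ α * c ^ (r - α) * e ^ (n - α))
          = (e * a ^ α) * c ^ (r - α) * e ^ (n - α) := by
            rw [← mul_assoc, ← mul_assoc]
        _ = a ^ α * (e * c ^ (r - α)) * e ^ (n - α) := by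
            rw [h1, mul_assoc (a ^ α) e]
        _ = a ^ α * (c ^ (r - α) * e + (r - α) • (c ^ (r - α - 1) * a)) * e ^ (n - α) := by
            rw [aux1 e c a h hac (r - α)]
        _ = a ^ α * c ^ (r - α) * (e * e ^ (n - α))
              + (r - α) • (a ^ α * (c ^ (r - α - 1) * a) * e ^ (n - α)) := by
            rw [mul_add, add_mul, mul_smul_comm, smul_mul_assoc, ← mul_assoc, mul_assoc (a ^ α * c ^ (r - α))]
        _ = a ^ α * c ^ (r - α) * e ^ (n + 1 - α)
              + (r - α) • (a ^ (α+1) * c ^ (r - (α+1)) * e ^ (n + 1 - (α+1))) := by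
            rw [e1, e2, e3, ← pow_succ', h4, ← mul_assoc, ← pow_succ]
    calc e ^ (n+1) * c ^ r
        = e * (e ^ n * c ^ r) := by rw [pow_succ', mul_assoc]
      _ = ∑ α ∈ Finset.range (n+1), (n.choose α * r.choose α * α.factorial) •
            (e * (a ^ α * c ^ (r - α) * e ^ (n - α))) := by
          rw [ih, Finset.mul_sum]; simp only [mul_smul_comm]
      _ = ∑ α ∈ Finset.range (n+1),
            ((n.choose α * r.choose α * α.factorial) •
              (a ^ α * c ^ (r - α) * e ^ (n + 1 - α))
            + (n.choose α * r.choose α * α.factorial * (r - α)) •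
              (a ^ (α+1) * c ^ (r - (α+1)) * e ^ (n + 1 - (α+1)))) := by
          refine Finset.sum_congr rfl (fun α hα => ?_)
          rw [key α (Nat.lt_succ_iff.mp (Finset.mem_range.mp hα)), smul_add, smul_smul]
      _ = (∑ α ∈ Finset.range (n+1), (n.choose α * r.choose α * α.factorial) •
              (a ^ α * c ^ (r - α) * e ^ (n + 1 - α)))
          + ∑ α ∈ Finset.range (n+1), (n.choose α * r.choose α * α.factorial * (r - α)) •
              (a ^ (α+1) * c ^ (r - (α+1)) * e ^ (n + 1 - (α+1))) := by
          rw [Finset.sum_add_distrib]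
      _ = ((∑ α ∈ Finset.range n, (n.choose (α+1) * r.choose (α+1) * (α+1).factorial) •
              (a ^ (α+1) * c ^ (r - (α+1)) * e ^ (n + 1 - (α+1))))
            + (a ^ 0 * c ^ (r - 0) * e ^ (n + 1 - 0)))
          + ∑ α ∈ Finset.range (n+1), (n.choose α * r.choose α * α.factorial * (r - α)) •
              (a ^ (α+1) * c ^ (r - (α+1)) * e ^ (n + 1 - (α+1))) := by
          rw [Finset.sum_range_succ' (fun α => (n.choose α * r.choose α * α.factorial) •
              (a ^ α * c ^ (r - α) * e ^ (n + 1 - α)))]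
          simp
      _ = ((∑ α ∈ Finset.range (n+1), (n.choose (α+1) * r.choose (α+1) * (α+1).factorial) •
              (a ^ (α+1) * c ^ (r - (α+1)) * e ^ (n + 1 - (α+1))))
            + (a ^ 0 * c ^ (r - 0) * e ^ (n + 1 - 0)))
          + ∑ α ∈ Finset.range (n+1), (n.choose α * r.choose α * α.factorial * (r - α)) •
              (a ^ (α+1) * c ^ (r - (α+1)) * e ^ (n + 1 - (α+1))) := by
          rw [Finset.sum_range_succ (fun α => (n.choose (α+1) * r.choose (α+1) * (α+1).factorial) •
              (a ^ (α+1) * c ^ (r - (α+1)) * e ^ (n + 1 - (α+1)))) n]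
          simp [Nat.choose_succ_self]
      _ = (∑ α ∈ Finset.range (n+1), ((n+1).choose (α+1) * r.choose (α+1) * (α+1).factorial) •
              (a ^ (α+1) * c ^ (r - (α+1)) * e ^ (n + 1 - (α+1))))
            + (a ^ 0 * c ^ (r - 0) * e ^ (n + 1 - 0)) := by
          rw [add_right_comm, ← Finset.sum_add_distrib]
          congr 1
          refine Finset.sum_congr rfl (fun α hα => ?_)
          rw [← add_smul, coef_id]
      _ = ∑ α ∈ Finset.range (n+1+1), ((n+1).choose α * r.choose α * α.factorial) •
              (a ^ α * c ^ (r - α) * e ^ (n + 1 - α)) := by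
          rw [Finset.sum_range_succ' (fun α => ((n+1).choose α * r.choose α * α.factorial) •
              (a ^ α * c ^ (r - α) * e ^ (n + 1 - α)))]
          simp

private lemma aux2w (e c a : R) (h : e * c = c * e + a) (hac : a * c = c * a) (hae : a * e = e * a)
    (r N : ℕ) (Y : R) :
    e ^ N * (c ^ r * Y) = ∑ α ∈ Finset.range (N+1),
      (N.choose α * r.choose α * α.factorial) • (a ^ α * (c ^ (r - α) * (e ^ (N - α) * Y))) := by
  rw [← mul_assoc, aux2 e c a h hac hae r N, Finset.sum_mul]
  simp only [smul_mul_assoc, mul_assoc]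

private lemma swap_pow {x y : R} (h : Commute x y) (i j : ℕ) (X : R) :
    y ^ i * (x ^ j * X) = x ^ j * (y ^ i * X) := by
  rw [← mul_assoc, ((h.pow_pow j i).symm).eq, mul_assoc]

private lemma merge_pow (x : R) (i j : ℕ) (X : R) : x ^ i * (x ^ j * X) = x ^ (i+j) * X := by
  rw [← mul_assoc, ← pow_add]

private lemma shrink {M : Type*} [AddCommMonoid M] (f : ℕ → M) (N N' : ℕ) (hN : N' ≤ N)
    (hf : ∀ α, N' < α → α ≤ N → f α = 0) :
    ∑ α ∈ Finset.range (N+1), f α = ∑ α ∈ Finset.range (N'+1), f α := by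
  refine (Finset.sum_subset (Finset.range_subset_range.mpr (by omega)) ?_).symm
  intro x hx hx'
  simp only [Finset.mem_range] at hx hx'
  exact hf x (by omega) (by omega)

end Aux

theorem stmt_11 {K : Type*} [Field K] [CharZero K]
    {L : Type*} [LieRing L] [LieAlgebra K L]
    (x1 x2 x3 x4 x5 : L)
    (h53 : ⁅x5, x3⁆ = -x1) (h54 : ⁅x5, x4⁆ = -x2)
    (h12 : ⁅x1, x2⁆ = 0) (h13 : ⁅x1, x3⁆ = 0) (h14 : ⁅x1, x4⁆ = 0) (h15 : ⁅x1, x5⁆ = 0)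
    (h23 : ⁅x2, x3⁆ = 0) (h24 : ⁅x2, x4⁆ = 0) (h25 : ⁅x2, x5⁆ = 0) (h34 : ⁅x3, x4⁆ = 0)
    (j k l m n p q r s t : ℕ) :
    ((ι K x1 : UniversalEnvelopingAlgebra K L) ^ (j) * (ι K x2 : UniversalEnvelopingAlgebra K L) ^ (k) * (ι K x3 : UniversalEnvelopingAlgebra K L) ^ (l) * (ι K x4 : UniversalEnvelopingAlgebra K L) ^ (m) * (ι K x5 : UniversalEnvelopingAlgebra K L) ^ (n))
      * ((ι K x1 : UniversalEnvelopingAlgebra K L) ^ (p) * (ι K x2 : UniversalEnvelopingAlgebra K L) ^ (q) * (ι K x3 : UniversalEnvelopingAlgebra K L) ^ (r) * (ι K x4 : UniversalEnvelopingAlgebra K L) ^ (s) * (ι K x5 : UniversalEnvelopingAlgebra K L) ^ (t)) =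
      ∑ α ∈ Finset.range (min n r + 1), ∑ β ∈ Finset.range (min (n - α) s + 1),
        ((-1 : K) ^ (α + β) *
          ((n.choose α * r.choose α * (n - α).choose β * s.choose β
            * α.factorial * β.factorial : ℕ) : K)) •
          ((ι K x1 : UniversalEnvelopingAlgebra K L) ^ (j + p + α) * (ι K x2 : UniversalEnvelopingAlgebra K L) ^ (k + q + β) * (ι K x3 : UniversalEnvelopingAlgebra K L) ^ (l + r - α)
            * (ι K x4 : UniversalEnvelopingAlgebra K L) ^ (m + s - β) * (ι K x5 : UniversalEnvelopingAlgebra K L) ^ (n + t - α - β)) := by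
  letI : LieRing (UniversalEnvelopingAlgebra K L) := LieRing.ofAssociativeRing
  have comm0 : ∀ x y : L, ⁅x,y⁆ = 0 →
      Commute (ι K x : UniversalEnvelopingAlgebra K L) (ι K y) := by
    intro x y hxy
    have hl := ((ι K : L →ₗ⁅K⁆ UniversalEnvelopingAlgebra K L).map_lie x y).symm
    rw [hxy, map_zero, Ring.lie_def] at hl
    exact sub_eq_zero.mp hl
  have hl53 : (ι K x5 : UniversalEnvelopingAlgebra K L) * ι K x3 - ι K x3 * ι K x5
      = -(ι K x1) := by
    have hh := (ι K : L →ₗ⁅K⁆ UniversalEnvelopingAlgebra K L).map_lie x5 x3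
    rw [h53, map_neg, Ring.lie_def] at hh
    exact hh.symm
  have hl54 : (ι K x5 : UniversalEnvelopingAlgebra K L) * ι K x4 - ι K x4 * ι K x5
      = -(ι K x2) := by
    have hh := (ι K : L →ₗ⁅K⁆ UniversalEnvelopingAlgebra K L).map_lie x5 x4
    rw [h54, map_neg, Ring.lie_def] at hh
    exact hh.symm
  have hew : (ι K x5 : UniversalEnvelopingAlgebra K L) * ι K x3
      = ι K x3 * ι K x5 + -(ι K x1) := by rw [← hl53]; noncomm_ring
  have hez : (ι K x5 : UniversalEnvelopingAlgebra K L) * ι K x4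
      = ι K x4 * ι K x5 + -(ι K x2) := by rw [← hl54]; noncomm_ring
  have cuv := comm0 x1 x2 h12
  have cuw := comm0 x1 x3 h13
  have cuz := comm0 x1 x4 h14
  have cue := comm0 x1 x5 h15
  have cvw := comm0 x2 x3 h23
  have cvz := comm0 x2 x4 h24
  have cve := comm0 x2 x5 h25
  have cwz := comm0 x3 x4 h34
  set u : UniversalEnvelopingAlgebra K L := ι K x1 with hu
  set v : UniversalEnvelopingAlgebra K L := ι K x2 with hv
  set w : UniversalEnvelopingAlgebra K L := ι K x3 with hw
  set z : UniversalEnvelopingAlgebra K L := ι K x4 with hz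
  set e : UniversalEnvelopingAlgebra K L := ι K x5 with he
  have huw : (-u) * w = w * (-u) := (cuw.neg_left).eq
  have hue : (-u) * e = e * (-u) := (cue.neg_left).eq
  have hvz : (-v) * z = z * (-v) := (cvz.neg_left).eq
  have hve : (-v) * e = e * (-v) := (cve.neg_left).eq
  calc (u^j * v^k * w^l * z^m * e^n) * (u^p * v^q * w^r * z^s * e^t)
      = u^(j+p) * (v^(k+q) * (w^l * (z^m * (e^n * (w^r * (z^s * e^t)))))) := by
        simp only [mul_assoc]
        simp only [swap_pow cuv, swap_pow cuw, swap_pow cuz, swap_pow cue,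
          swap_pow cvw, swap_pow cvz, swap_pow cve, swap_pow cwz, merge_pow, ← pow_add]
    _ = u^(j+p) * (v^(k+q) * (w^l * (z^m * (∑ α ∈ Finset.range (n+1),
          (n.choose α * r.choose α * α.factorial) •
            ((-u)^α * (w^(r-α) * (e^(n-α) * (z^s * e^t)))))))) := by
        rw [aux2w e w (-u) hew huw hue r n (z^s * e^t)]
    _ = ∑ α ∈ Finset.range (n+1), (n.choose α * r.choose α * α.factorial) •
          (u^(j+p) * (v^(k+q) * (w^l * (z^m * ((-u)^α * (w^(r-α) * (e^(n-α) * (z^s * e^t)))))))) := by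
        simp only [Finset.mul_sum, mul_smul_comm]
    _ = ∑ α ∈ Finset.range (n+1), ∑ β ∈ Finset.range (n - α + 1),
          ((n.choose α * r.choose α * α.factorial) * ((n-α).choose β * s.choose β * β.factorial)) •
          (u^(j+p) * (v^(k+q) * (w^l * (z^m * ((-u)^α * (w^(r-α) *
            ((-v)^β * (z^(s-β) * (e^(n-α-β) * e^t))))))))) := by
        refine Finset.sum_congr rfl fun α hα => ?_
        rw [aux2w e z (-v) hez hvz hve s (n-α) (e^t)]
        simp only [Finset.mul_sum, Finset.smul_sum, mul_smul_comm, smul_smul]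
    _ = ∑ α ∈ Finset.range (n+1), ∑ β ∈ Finset.range (n - α + 1),
        ((-1 : K) ^ (α + β) *
          ((n.choose α * r.choose α * (n - α).choose β * s.choose β
            * α.factorial * β.factorial : ℕ) : K)) •
          (u ^ (j + p + α) * v ^ (k + q + β) * w ^ (l + r - α)
            * z ^ (m + s - β) * e ^ (n + t - α - β)) := by
        refine Finset.sum_congr rfl fun α hα => Finset.sum_congr rfl fun β hβ => ?_
        simp only [Finset.mem_range] at hα hβ
        by_cases hr : α ≤ r
        · by_cases hs : β ≤ s
          · have e1 : l + r - α = l + (r - α) := by omega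
            have e2 : m + s - β = m + (s - β) := by omega
            have e3 : n + t - α - β = (n - α - β) + t := by omega
            rw [e1, e2, e3, ← neg_one_smul K u, ← neg_one_smul K v, smul_pow, smul_pow]
            simp only [smul_mul_assoc, mul_smul_comm, smul_smul]
            rw [← Nat.cast_smul_eq_nsmul K, smul_smul]
            simp only [mul_assoc]
            simp only [swap_pow cuv, swap_pow cuw, swap_pow cuz, swap_pow cue,
              swap_pow cvw, swap_pow cvz, swap_pow cve, swap_pow cwz, merge_pow, ← pow_add]
            congr 1
            push_cast
            ring
          · have : s < β := by omega
            simp [Nat.choose_eq_zero_of_lt this]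
        · have : r < α := by omega
          simp [Nat.choose_eq_zero_of_lt this]
    _ = ∑ α ∈ Finset.range (n+1), ∑ β ∈ Finset.range (min (n - α) s + 1),
        ((-1 : K) ^ (α + β) *
          ((n.choose α * r.choose α * (n - α).choose β * s.choose β
            * α.factorial * β.factorial : ℕ) : K)) •
          (u ^ (j + p + α) * v ^ (k + q + β) * w ^ (l + r - α)
            * z ^ (m + s - β) * e ^ (n + t - α - β)) := by
        refine Finset.sum_congr rfl fun α hα => ?_
        refine shrink _ (n - α) (min (n - α) s) (by omega) fun β hβ1 hβ2 => ?_
        have : s < β := by omega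
        simp [Nat.choose_eq_zero_of_lt this]
    _ = ∑ α ∈ Finset.range (min n r + 1), ∑ β ∈ Finset.range (min (n - α) s + 1),
        ((-1 : K) ^ (α + β) *
          ((n.choose α * r.choose α * (n - α).choose β * s.choose β
            * α.factorial * β.factorial : ℕ) : K)) •
          (u ^ (j + p + α) * v ^ (k + q + β) * w ^ (l + r - α)
            * z ^ (m + s - β) * e ^ (n + t - α - β)) := by
        refine shrink _ n (min n r) (by omega) fun α hα1 hα2 => ?_
        refine Finset.sum_eq_zero fun β hβ => ?_
        have : r < α := by omega
        simp [Nat.choose_eq_zero_of_lt this]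
end

section
/- Let L be a Lie algebra over a field of characteristic zero with elements x_1, x_2, x_3, x_4, x_5 such that [x_4,x_2] = -x_1 and [x_5,x_3] = -x_1, and all other brackets among x_1, ..., x_5 are 0 (the Lie algebra 𝔫_{5,3}). Then for all nonnegative integers j, k, l, m, n, p, q, r, s, t, in the universal enveloping algebra U(L) one has (x_1^j x_2^k x_3^l x_4^m x_5^n)(x_1^p x_2^q x_3^r x_4^s x_5^t) = \sum_{\alpha=0}^{\min\{n,r\}} \sum_{\beta=0}^{\min\{m,q\}} \binom{n}{\alpha} \binom{r}{\alpha} \binom{m}{\beta} \binom{q}{\beta} \alpha! \beta! (-1)^{\alpha+\beta} \, x_1^{j+p+\alpha+\beta} x_2^{k+q-\beta} x_3^{l+r-\alpha} x_4^{m+s-\beta} x_5^{n+t-\alpha}. -/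
open UniversalEnvelopingAlgebra

section aux
variable {R : Type*} [Ring R] {b d z : R}

lemma aux_dbu1 (hdb : d * b = b * d + z) (hzb : Commute z b) :
    ∀ u : ℕ, d * b ^ (u+1) = b ^ (u+1) * d + (u+1) • (b ^ u * z) := by
  intro u
  induction u with
  | zero => simpa using hdb
  | succ u ih =>
    have h1 : d * b ^ (u+2) = (d * b ^ (u+1)) * b := by
      rw [mul_assoc, ← pow_succ]
    rw [h1, ih, add_mul, mul_assoc, hdb, smul_mul_assoc, mul_assoc, hzb.eq,
      ← mul_assoc, ← pow_succ, mul_add, ← mul_assoc, ← pow_succ]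
    rw [add_assoc, succ_nsmul]
    congr 1
    rw [succ_nsmul]
    module

lemma aux_dbu (hdb : d * b = b * d + z) (hzb : Commute z b) (u : ℕ) :
    d * b ^ u = b ^ u * d + u • (b ^ (u-1) * z) := by
  cases u with
  | zero => simp
  | succ u => simpa using aux_dbu1 hdb hzb u

lemma aux_coeff_id (m q i : ℕ) :
    (m+1).choose (i+1) * q.choose (i+1) * (i+1).factorial =
      m.choose (i+1) * q.choose (i+1) * (i+1).factorial
        + m.choose i * q.choose i * i.factorial * (q - i) := by
  rw [Nat.choose_succ_succ, add_mul, add_mul, add_comm]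
  congr 1
  have h := Nat.choose_succ_right_eq q i
  rw [Nat.factorial_succ]
  calc m.choose i * q.choose (i+1) * ((i+1) * i.factorial)
      = m.choose i * (q.choose (i+1) * (i+1)) * i.factorial := by ring
    _ = m.choose i * (q.choose i * (q - i)) * i.factorial := by rw [h]
    _ = m.choose i * q.choose i * i.factorial * (q - i) := by ring

lemma aux_weyl (hdb : d * b = b * d + z) (hzb : Commute z b) (hzd : Commute z d)
    (m q : ℕ) :
    d ^ m * b ^ q = ∑ β ∈ Finset.range (m+1),
      (m.choose β * q.choose β * β.factorial) • (b ^ (q-β) * z ^ β * d ^ (m-β)) := by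
  induction m with
  | zero => simp
  | succ m ih =>
    have h1 : d ^ (m+1) * b ^ q = d * (d ^ m * b ^ q) := by
      rw [← mul_assoc, ← pow_succ']
    rw [h1, ih, Finset.mul_sum]
    have h2 : ∀ β ∈ Finset.range (m+1),
        d * ((m.choose β * q.choose β * β.factorial) • (b ^ (q-β) * z ^ β * d ^ (m-β)))
          = (m.choose β * q.choose β * β.factorial) • (b ^ (q-β) * z ^ β * d ^ (m+1-β))
            + (m.choose β * q.choose β * β.factorial * (q-β)) •
                (b ^ (q-β-1) * z ^ (β+1) * d ^ (m-β)) := by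
      intro β hβ
      rw [Finset.mem_range] at hβ
      have hd : d * (b ^ (q-β) * z ^ β * d ^ (m-β))
          = (d * b ^ (q-β)) * (z ^ β * d ^ (m-β)) := by
        rw [mul_assoc, mul_assoc]
      rw [mul_smul_comm, hd, aux_dbu hdb hzb, add_mul, smul_mul_assoc]
      have hdz : d * z ^ β = z ^ β * d := ((hzd.symm).pow_right β).eq
      have e1 : b ^ (q-β) * d * (z ^ β * d ^ (m-β)) = b ^ (q-β) * z ^ β * d ^ (m+1-β) := by
        rw [mul_assoc, ← mul_assoc d, hdz, mul_assoc, ← pow_succ']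
        have : m - β + 1 = m + 1 - β := by omega
        rw [this, ← mul_assoc]
      have e2 : b ^ (q-β-1) * z * (z ^ β * d ^ (m-β)) = b ^ (q-β-1) * z ^ (β+1) * d ^ (m-β) := by
        rw [mul_assoc, ← mul_assoc z, ← pow_succ', ← mul_assoc]
      rw [e1, e2, smul_add, smul_smul]
    rw [Finset.sum_congr rfl h2, Finset.sum_add_distrib]
    set A : ℕ → R := fun β => (m.choose β * q.choose β * β.factorial) •
        (b ^ (q-β) * z ^ β * d ^ (m+1-β)) with hA
    set B : ℕ → R := fun β => (m.choose β * q.choose β * β.factorial * (q-β)) •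
        (b ^ (q-β-1) * z ^ (β+1) * d ^ (m-β)) with hB
    set C : ℕ → R := fun β => ((m+1).choose β * q.choose β * β.factorial) •
        (b ^ (q-β) * z ^ β * d ^ (m+1-β)) with hC
    rw [Finset.sum_range_succ' C (m+1), Finset.sum_range_succ' A m]
    have hA0C0 : A 0 = C 0 := by simp [hA, hC]
    have hext : (∑ k ∈ Finset.range m, A (k+1)) = ∑ k ∈ Finset.range (m+1), A (k+1) := by
      rw [Finset.sum_range_succ]
      have : A (m+1) = 0 := by
        simp only [hA]
        rw [Nat.choose_eq_zero_of_lt (by omega)]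
        simp
      rw [this, add_zero]
    rw [hext, hA0C0, add_right_comm, ← Finset.sum_add_distrib]
    congr 1
    refine Finset.sum_congr rfl (fun i hi => ?_)
    simp only [hA, hB, hC]
    have e3 : m + 1 - (i + 1) = m - i := by omega
    have e4 : q - (i+1) = q - i - 1 := by omega
    rw [aux_coeff_id, add_smul, e3, e4]

end aux

theorem stmt_13 {K : Type*} [Field K] [CharZero K]
    {L : Type*} [LieRing L] [LieAlgebra K L]
    (x1 x2 x3 x4 x5 : L)
    (h42 : ⁅x4, x2⁆ = -x1) (h53 : ⁅x5, x3⁆ = -x1)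
    (h12 : ⁅x1, x2⁆ = 0) (h13 : ⁅x1, x3⁆ = 0) (h14 : ⁅x1, x4⁆ = 0) (h15 : ⁅x1, x5⁆ = 0)
    (h23 : ⁅x2, x3⁆ = 0) (h25 : ⁅x2, x5⁆ = 0) (h34 : ⁅x3, x4⁆ = 0) (h45 : ⁅x4, x5⁆ = 0)
    (j k l m n p q r s t : ℕ) :
    ((ι K x1 : UniversalEnvelopingAlgebra K L) ^ (j) * (ι K x2 : UniversalEnvelopingAlgebra K L) ^ (k) * (ι K x3 : UniversalEnvelopingAlgebra K L) ^ (l) * (ι K x4 : UniversalEnvelopingAlgebra K L) ^ (m) * (ι K x5 : UniversalEnvelopingAlgebra K L) ^ (n))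
      * ((ι K x1 : UniversalEnvelopingAlgebra K L) ^ (p) * (ι K x2 : UniversalEnvelopingAlgebra K L) ^ (q) * (ι K x3 : UniversalEnvelopingAlgebra K L) ^ (r) * (ι K x4 : UniversalEnvelopingAlgebra K L) ^ (s) * (ι K x5 : UniversalEnvelopingAlgebra K L) ^ (t)) =
      ∑ α ∈ Finset.range (min n r + 1), ∑ β ∈ Finset.range (min m q + 1),
        ((-1 : K) ^ (α + β) *
          ((n.choose α * r.choose α * m.choose β * q.choose β
            * α.factorial * β.factorial : ℕ) : K)) •
          ((ι K x1 : UniversalEnvelopingAlgebra K L) ^ (j + p + α + β) * (ι K x2 : UniversalEnvelopingAlgebra K L) ^ (k + q - β) * (ι K x3 : UniversalEnvelopingAlgebra K L) ^ (l + r - α)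
            * (ι K x4 : UniversalEnvelopingAlgebra K L) ^ (m + s - β) * (ι K x5 : UniversalEnvelopingAlgebra K L) ^ (n + t - α)) := by
  set U := UniversalEnvelopingAlgebra K L
  letI : LieRing U := LieRing.ofAssociativeRing
  letI : LieAlgebra K U := LieAlgebra.ofAssociativeAlgebra
  set a : U := ι K x1 with ha
  set b : U := ι K x2 with hb
  set c : U := ι K x3 with hc
  set d : U := ι K x4 with hd
  set e : U := ι K x5 with he
  -- commuting facts
  have comm : ∀ x y : L, ⁅x, y⁆ = 0 → Commute (ι K x : U) (ι K y) := by
    intro x y h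
    have h1 : ι K ⁅x, y⁆ = ⁅(ι K x : U), ι K y⁆ := LieHom.map_lie _ _ _
    rw [h, Ring.lie_def] at h1
    have h2 : (ι K x : U) * ι K y - ι K y * ι K x = 0 := by
      rw [← h1]; exact map_zero _
    exact (sub_eq_zero.mp h2)
  have hab : Commute a b := comm _ _ h12
  have hac : Commute a c := comm _ _ h13
  have had : Commute a d := comm _ _ h14
  have hae : Commute a e := comm _ _ h15
  have hbc : Commute b c := comm _ _ h23
  have hbe : Commute b e := comm _ _ h25
  have hcd : Commute c d := comm _ _ h34
  have hde : Commute d e := comm _ _ h45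
  -- the Weyl relations
  have hdb : d * b = b * d + (-a) := by
    have h1 : ι K ⁅x4, x2⁆ = ⁅(ι K x4 : U), ι K x2⁆ := LieHom.map_lie _ _ _
    rw [h42, Ring.lie_def, map_neg] at h1
    rw [← sub_eq_iff_eq_add', ← h1]
  have hec : e * c = c * e + (-a) := by
    have h1 : ι K ⁅x5, x3⁆ = ⁅(ι K x5 : U), ι K x3⁆ := LieHom.map_lie _ _ _
    rw [h53, Ring.lie_def, map_neg] at h1
    rw [← sub_eq_iff_eq_add', ← h1]
  -- commutes with -a
  have hzb : Commute (-a) b := hab.neg_left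
  have hzc : Commute (-a) c := hac.neg_left
  have hzd : Commute (-a) d := had.neg_left
  have hze : Commute (-a) e := hae.neg_left
  have hW1 := aux_weyl hdb hzb hzd m q
  have hW2 := aux_weyl hec hzc hze n r
  have rearr : (a^j*b^k*c^l*d^m*e^n) * (a^p*b^q*c^r*d^s*e^t)
      = a^j*(a^p*(b^k*((d^m*b^q)*(d^s*(c^l*((e^n*c^r)*e^t)))))) := by
    simp only [mul_assoc]
    rw [((hae.symm).pow_pow n p).left_comm]
    rw [((had.symm).pow_pow m p).left_comm]
    rw [((hac.symm).pow_pow l p).left_comm]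
    rw [((hab.symm).pow_pow k p).left_comm]
    rw [((hbe.symm).pow_pow n q).left_comm]
    rw [((hcd).pow_pow l m).left_comm]
    rw [((hbc.symm).pow_pow l q).left_comm]
    rw [((hcd).pow_pow r s).left_comm]
    rw [((hde.symm).pow_pow n s).left_comm]
    rw [((hcd).pow_pow l s).left_comm]
  rw [rearr, hW1, hW2]
  trans (∑ α ∈ Finset.range (n+1), ∑ β ∈ Finset.range (m+1),
      ((n.choose α * r.choose α * α.factorial) * (m.choose β * q.choose β * β.factorial)) •
        (a^j*(a^p*(b^k*((b^(q-β)*((-a)^β*d^(m-β)))*(d^s*(c^l*((c^(r-α)*((-a)^α*e^(n-α)))*e^t))))))))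
  · simp only [U, Finset.mul_sum, Finset.sum_mul, Finset.smul_sum, smul_mul_assoc,
      mul_smul_comm, smul_smul, mul_assoc]
  have hsubA : Finset.range (min n r + 1) ⊆ Finset.range (n+1) :=
    Finset.range_subset_range.mpr (by omega)
  have hsubB : Finset.range (min m q + 1) ⊆ Finset.range (m+1) :=
    Finset.range_subset_range.mpr (by omega)
  refine Eq.trans (Finset.sum_subset hsubA ?_).symm (Finset.sum_congr rfl ?_)
  · intro x hx hx'
    rw [Finset.mem_range] at hx
    simp only [Finset.mem_range, not_lt] at hx'
    have hr : r.choose x = 0 := Nat.choose_eq_zero_of_lt (by omega)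
    simp [hr]
  · intro α hα
    rw [Finset.mem_range] at hα
    refine Eq.trans (Finset.sum_subset hsubB ?_).symm (Finset.sum_congr rfl ?_)
    · intro x hx hx'
      rw [Finset.mem_range] at hx
      simp only [Finset.mem_range, not_lt] at hx'
      have hq : q.choose x = 0 := Nat.choose_eq_zero_of_lt (by omega)
      simp [hq]
    · intro β hβ
      rw [Finset.mem_range] at hβ
      have hαn : α ≤ n := by omega
      have hαr : α ≤ r := by omega
      have hβm : β ≤ m := by omega
      have hβq : β ≤ q := by omega
      have hneg : ∀ i : ℕ, (-a : U)^i = ((-1:K)^i) • a^i := by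
        intro i
        rw [← neg_one_smul K a, smul_pow]
      have PT : a^j*(a^p*(b^k*((b^(q-β)*(a^β*d^(m-β)))*(d^s*(c^l*((c^(r-α)*(a^α*e^(n-α)))*e^t))))))
          = a ^ (j + p + α + β) * b ^ (k + q - β) * c ^ (l + r - α)
              * d ^ (m + s - β) * e ^ (n + t - α) := by
        conv_rhs => rw [show j+p+α+β = j+(p+(α+β)) from by omega,
          show k+q-β = k+(q-β) from by omega,
          show l+r-α = l+(r-α) from by omega,
          show m+s-β = (m-β)+s from by omega,
          show n+t-α = (n-α)+t from by omega]
        simp only [pow_add, mul_assoc]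
        rw [((hab.symm).pow_pow (q-β) β).left_comm]
        rw [((hab.symm).pow_pow k β).left_comm]
        rw [((hac.symm).pow_pow (r-α) α).left_comm]
        rw [((hac.symm).pow_pow l α).left_comm]
        rw [((had.symm).pow_pow s α).left_comm]
        rw [((had.symm).pow_pow (m-β) α).left_comm]
        rw [((hab.symm).pow_pow (q-β) α).left_comm]
        rw [((hab.symm).pow_pow k α).left_comm]
        rw [(((Commute.refl a)).pow_pow β α).left_comm]
        rw [((hcd.symm).pow_pow s l).left_comm]
        rw [((hcd.symm).pow_pow (m-β) l).left_comm]
        rw [((hcd.symm).pow_pow s (r-α)).left_comm]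
        rw [((hcd.symm).pow_pow (m-β) (r-α)).left_comm]
      simp only [hneg, smul_mul_assoc, mul_smul_comm, smul_smul]
      rw [← Nat.cast_smul_eq_nsmul K]
      rw [smul_smul, PT]
      congr 1
      push_cast
      ring
end

section
/- Let L be a Lie algebra over a field of characteristic zero with elements x_1, x_2, x_3, x_4, x_5 such that [x_4,x_3] = -x_1, [x_5,x_2] = -x_1, and [x_5,x_4] = -x_2, and all other brackets among x_1, ..., x_5 are 0 (the Lie algebra 𝔫_{5,4}). Then for all nonnegative integers j, k, l, m, n, p, q, r, s, t, in the universal enveloping algebra U(L) one has (x_1^j x_2^k x_3^l x_4^m x_5^n)(x_1^p x_2^q x_3^r x_4^s x_5^t) = \sum_{\alpha=0}^{\min\{n,q\}} \sum_{\beta_1,\beta_2 \ge 0,\ \beta_1+\beta_2 \le s,\ \beta_1+2\beta_2 \le n-\alpha} \sum_{\gamma=0}^{\min\{m,r\}} \binom{n}{\alpha} \binom{q}{\alpha} \binom{s}{\beta_1+\beta_2} \binom{n-\alpha}{\beta_1+2\beta_2} \binom{\beta_1+\beta_2}{\beta_1} \binom{m}{\gamma} \binom{r}{\gamma} \alpha!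 \frac{(\beta_1+2\beta_2)!}{2^{\beta_2}} \gamma! (-1)^{\alpha+\beta_1+\gamma} \, x_1^{j+p+\alpha+\beta_2+\gamma} x_2^{k+q-\alpha+\beta_1} x_3^{l+r-\gamma} x_4^{m+s-\gamma-\beta_1-\beta_2} x_5^{n+t-\alpha-\beta_1-2\beta_2}. -/
open UniversalEnvelopingAlgebra Finset

noncomputable section PaperAux
section Shift
variable {M : Type*} [AddCommGroup M]

lemma sum_shift_down (n : ℕ) (g : ℕ → M) (hg : g n = 0) :
    ∑ i ∈ range (n+1), (if i = 0 then 0 else g (i-1)) = ∑ i ∈ range (n+1), g i := by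
  rw [Finset.sum_range_succ' (fun i => if i = 0 then (0:M) else g (i-1)) n,
    Finset.sum_range_succ g n, hg, add_zero]
  simp

lemma sum_shift_up (n : ℕ) (g : ℕ → M) (hg0 : g 0 = 0) (hgtop : g (n+1) = 0) :
    ∑ i ∈ range (n+1), g (i+1) = ∑ i ∈ range (n+1), g i := by
  have h := Finset.sum_range_succ' g (n+1)
  rw [Finset.sum_range_succ g (n+1), hgtop, hg0, add_zero, add_zero] at h
  exact h.symm

lemma double_shift (s : ℕ) (T A B C : ℕ → ℕ → M)
    (hT : ∀ β1 ∈ range (s+1), ∀ β2 ∈ range (s+1), T β1 β2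
        = A β1 β2 - (if β1 = 0 then 0 else B (β1-1) β2)
          - (if β2 = 0 then 0 else C (β1+1) (β2-1)))
    (hB : ∀ β2, B s β2 = 0)
    (hC0 : ∀ β2, C 0 β2 = 0)
    (hCs : ∀ β2, C (s+1) β2 = 0)
    (hCtop : ∀ β1, C β1 s = 0) :
    ∑ β1 ∈ range (s+1), ∑ β2 ∈ range (s+1), T β1 β2
    = ∑ β1 ∈ range (s+1), ∑ β2 ∈ range (s+1), (A β1 β2 - B β1 β2 - C β1 β2) := by
  have step1 : ∑ β1 ∈ range (s+1), ∑ β2 ∈ range (s+1), T β1 β2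
      = ∑ β1 ∈ range (s+1), ∑ β2 ∈ range (s+1),
        (A β1 β2 - (if β1 = 0 then 0 else B (β1-1) β2)
          - (if β2 = 0 then 0 else C (β1+1) (β2-1))) :=
    sum_congr rfl fun β1 h1 => sum_congr rfl fun β2 h2 => hT β1 h1 β2 h2
  rw [step1]
  simp only [sum_sub_distrib]
  congr 1
  · congr 1
    -- ∑∑ if β1 = 0 then 0 else B (β1-1) β2 = ∑∑ B
    have e1 : ∀ β1, ∑ β2 ∈ range (s+1), (if β1 = 0 then (0:M) else B (β1-1) β2)
        = (if β1 = 0 then 0 else ∑ β2 ∈ range (s+1), B (β1-1) β2) := by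
      intro β1; split_ifs <;> simp
    calc ∑ β1 ∈ range (s+1), ∑ β2 ∈ range (s+1), (if β1 = 0 then (0:M) else B (β1-1) β2)
        = ∑ β1 ∈ range (s+1), (if β1 = 0 then (0:M) else ∑ β2 ∈ range (s+1), B (β1-1) β2) :=
          sum_congr rfl fun β1 _ => e1 β1
      _ = ∑ β1 ∈ range (s+1), ∑ β2 ∈ range (s+1), B β1 β2 :=
          sum_shift_down s (fun β1 => ∑ β2 ∈ range (s+1), B β1 β2) (sum_eq_zero fun β2 _ => hB β2)
  · -- ∑∑ if β2 = 0 then 0 else C (β1+1) (β2-1) = ∑∑ C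
    calc ∑ β1 ∈ range (s+1), ∑ β2 ∈ range (s+1), (if β2 = 0 then (0:M) else C (β1+1) (β2-1))
        = ∑ β1 ∈ range (s+1), ∑ β2 ∈ range (s+1), C (β1+1) β2 :=
          sum_congr rfl fun β1 _ => sum_shift_down s (C (β1+1)) (hCtop (β1+1))
      _ = ∑ β1 ∈ range (s+1), ∑ β2 ∈ range (s+1), C β1 β2 :=
          sum_shift_up s (fun β1 => ∑ β2 ∈ range (s+1), C β1 β2) (sum_eq_zero fun β2 _ => hC0 β2) (sum_eq_zero fun β2 _ => hCs β2)
end Shift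


def DD (K : Type*) [Field K] (s ν β1 β2 : ℕ) : K :=
  (-1:K)^β1 * ((s.choose (β1+β2) * ν.choose (β1+2*β2) * ((β1+β2).choose β1) *
    (β1+2*β2).factorial : ℕ) : K) / 2^β2

variable {K : Type*} [Field K] [CharZero K]

lemma DD_zero_left {s ν β1 β2 : ℕ} (h : s < β1 + β2) : DD K s ν β1 β2 = 0 := by
  simp [DD, Nat.choose_eq_zero_of_lt h]

lemma DD_zero_right {s ν β1 β2 : ℕ} (h : ν < β1 + 2*β2) : DD K s ν β1 β2 = 0 := by
  simp [DD, Nat.choose_eq_zero_of_lt h]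

lemma R4 (s N : ℕ) : DD K s (N+1) 0 0 = DD K s N 0 0 := by simp [DD]

lemma R3 (s N b : ℕ) : DD K s (N+1) (b+1) 0
    = DD K s N (b+1) 0 - DD K s N b 0 * ((s - b - 0 : ℕ) : K) := by
  have key : s.choose (b+1) * (b+1) = s.choose b * (s - b) := Nat.choose_succ_right_eq s b
  have keyK : ((s.choose (b+1) : K)) * ((b:K)+1) = (s.choose b : K) * ((s-b : ℕ):K) := by
    exact_mod_cast key
  simp only [DD, Nat.mul_zero, Nat.add_zero, Nat.choose_self, Nat.sub_zero, pow_zero, div_one,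
    Nat.choose_succ_succ N b, Nat.factorial_succ b]
  push_cast
  linear_combination ((-1:K)^(b+1) * (N.choose b : K) * (Nat.factorial b : K)) * keyK

lemma R2 (s N c : ℕ) : DD K s (N+1) 0 (c+1)
    = DD K s N 0 (c+1) - DD K s N (0+1) c * ((0+1 : ℕ) : K) := by
  simp only [DD, Nat.zero_add, zero_add]
  rw [show 2*(c+1) = (2*c+1)+1 from by ring, show 1+2*c = 2*c+1 from by ring,
    show 1+c = c+1 from by ring,
    Nat.choose_succ_succ N (2*c+1), Nat.factorial_succ (2*c+1),
    Nat.choose_zero_right, Nat.choose_one_right]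
  push_cast
  field_simp
  ring

lemma R1 (s N b c : ℕ) : DD K s (N+1) (b+1) (c+1)
    = DD K s N (b+1) (c+1) - DD K s N b (c+1) * ((s - b - (c+1) : ℕ) : K)
      - DD K s N (b+2) c * ((b+2 : ℕ) : K) := by
  have i1 : (b+1) + 2*(c+1) = (b+2*c+2)+1 := by ring
  have i2 : b + 2*(c+1) = b+2*c+2 := by ring
  have i3 : (b+2) + 2*c = b+2*c+2 := by ring
  have j1 : (b+1) + (c+1) = (b+c+1)+1 := by ring
  have j2 : b + (c+1) = b+c+1 := by ring
  have j3 : (b+2) + c = (b+c+1)+1 := by ring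
  have k1 : (b+c+1+1).choose (b+2) * (b+2) = (b+c+1+1).choose (b+1) * (c+1) := by
    have h := Nat.choose_succ_right_eq (b+c+1+1) (b+1)
    rw [show (b+c+1+1) - (b+1) = c+1 from by omega] at h
    exact h
  have k2 : (s - b - (c+1)) * (s.choose (b+c+1) * (b+c+1).choose b)
      = (s.choose (b+c+1+1) * (b+c+1+1).choose (b+1)) * (b+1) := by
    have h1 : s.choose (b+c+1+1) * (b+c+1+1) = s.choose (b+c+1) * (s - (b+c+1)) :=
      Nat.choose_succ_right_eq s (b+c+1)
    have h2 : (b+c+1+1) * (b+c+1).choose b = (b+c+1+1).choose (b+1) * (b+1) :=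
      Nat.add_one_mul_choose_eq (b+c+1) b
    have h3 : s - b - (c+1) = s - (b+c+1) := by omega
    calc (s - b - (c+1)) * (s.choose (b+c+1) * (b+c+1).choose b)
        = (s.choose (b+c+1) * (s - (b+c+1))) * (b+c+1).choose b := by rw [h3]; ring
      _ = (s.choose (b+c+1+1) * (b+c+1+1)) * (b+c+1).choose b := by rw [h1]
      _ = s.choose (b+c+1+1) * ((b+c+1+1) * (b+c+1).choose b) := by ring
      _ = s.choose (b+c+1+1) * ((b+c+1+1).choose (b+1) * (b+1)) := by rw [h2]
      _ = (s.choose (b+c+1+1) * (b+c+1+1).choose (b+1)) * (b+1) := by ring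
  have k1K : ((b+c+1+1).choose (b+2) : K) * ((b:K)+2)
      = ((b+c+1+1).choose (b+1) : K) * ((c:K)+1) := by exact_mod_cast k1
  have k2K : ((s - b - (c+1) : ℕ) : K) * ((s.choose (b+c+1) : K) * ((b+c+1).choose b : K))
      = ((s.choose (b+c+1+1) : K) * ((b+c+1+1).choose (b+1) : K)) * ((b:K)+1) := by
    exact_mod_cast k2
  simp only [DD]
  rw [i1, i2, i3, j1, j2, j3, Nat.choose_succ_succ N (b+2*c+2), Nat.factorial_succ (b+2*c+2)]
  push_cast
  linear_combination ((-1:K)^b * (N.choose (b+2*c+2) : K) * ((b+2*c+2).factorial : K) / 2^(c+1)) * k2K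
    + ((-1:K)^b * (N.choose (b+2*c+2) : K) * ((b+2*c+2).factorial : K) * (s.choose (b+c+1+1):K) / 2^c) * k1K

section Abstract
variable {K : Type*} [Field K] [CharZero K]
variable {A : Type*} [Ring A] [Algebra K A]

lemma auxA0 (u v w : A) (h : v * u = u * v - w) (hwu : Commute u w) (j : ℕ) :
    v * u ^ j = u ^ j * v - (j : K) • (u ^ (j - 1) * w) := by
  induction j with
  | zero => simp
  | succ i ih =>
    rcases Nat.eq_zero_or_pos i with hi | hi
    · subst hi; simpa using h
    · have h1 : i - 1 + 1 = i := by omega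
      have e1 : v * u ^ (i+1) = (u ^ i * v - (i:K) • (u ^ (i-1) * w)) * u := by
        rw [pow_succ, ← mul_assoc, ih]
      rw [e1, sub_mul, smul_mul_assoc, mul_assoc, h, mul_sub, mul_assoc (u ^ (i-1)),
        ← hwu.eq, ← mul_assoc (u ^ (i-1)), ← pow_succ, h1, ← mul_assoc, ← pow_succ,
        Nat.add_sub_cancel, sub_sub]
      congr 1
      push_cast
      rw [add_smul, one_smul, add_comm]

lemma auxA0' (u v w z : A) (h : v * u = u * v - w) (hwu : Commute u w) (j : ℕ) :
    v * (u ^ j * z) = u ^ j * (v * z) - (j : K) • (u ^ (j - 1) * (w * z)) := by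
  rw [← mul_assoc, auxA0 (K := K) u v w h hwu, sub_mul, smul_mul_assoc, mul_assoc, mul_assoc]

/-- one-step move of X5 past a canonical monomial -/
lemma scalA (n q α : ℕ) :
    ((-1:K)^(α+1) * (((n+1).choose (α+1) * q.choose (α+1) * (α+1).factorial : ℕ) : K))
    = (-1:K)^(α+1) * ((n.choose (α+1) * q.choose (α+1) * (α+1).factorial : ℕ) : K)
      - ((-1:K)^α * ((n.choose α * q.choose α * α.factorial : ℕ) : K)) * ((q - α : ℕ) : K) := by
  have h2 : q.choose (α+1) * (α+1) = q.choose α * (q - α) := Nat.choose_succ_right_eq q α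
  have h3 : n.choose α * q.choose (α+1) * ((α+1) * α.factorial)
      = (q-α) * (n.choose α * q.choose α * α.factorial) := by
    rw [show n.choose α * q.choose (α+1) * ((α+1) * α.factorial)
        = (q.choose (α+1) * (α+1)) * (n.choose α * α.factorial) by ring, h2]
    ring
  have hnat : (n+1).choose (α+1) * q.choose (α+1) * (α+1).factorial
      = n.choose (α+1) * q.choose (α+1) * (α+1).factorial
        + (q - α) * (n.choose α * q.choose α * α.factorial) := by
    rw [Nat.choose_succ_succ, Nat.factorial_succ, add_mul, add_mul, h3]
    ring
  have hK : (((n+1).choose (α+1) * q.choose (α+1) * (α+1).factorial : ℕ) : K)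
      = ((n.choose (α+1) * q.choose (α+1) * (α+1).factorial : ℕ) : K)
        + ((q - α:ℕ):K) * ((n.choose α * q.choose α * α.factorial : ℕ) : K) := by
    exact_mod_cast congrArg (fun x : ℕ => (x : K)) hnat
  rw [hK]; ring

lemma lemA (u v w : A) (h : v * u = u * v - w) (hwu : Commute u w) (hwv : Commute v w)
    (q n : ℕ) : v ^ n * u ^ q = ∑ α ∈ range (n+1),
      ((-1:K)^α * ((n.choose α * q.choose α * α.factorial : ℕ) : K)) •
      (w ^ α * u ^ (q - α) * v ^ (n - α)) := by
  induction n with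
  | zero => simp
  | succ n ih =>
    have key : ∀ α ∈ range (n+1),
        ((-1:K)^α * ((n.choose α * q.choose α * α.factorial : ℕ) : K)) •
          (v * (w ^ α * u ^ (q - α) * v ^ (n - α)))
        = ((-1:K)^α * ((n.choose α * q.choose α * α.factorial : ℕ) : K)) •
            (w ^ α * u ^ (q - α) * v ^ (n + 1 - α))
          - (((-1:K)^α * ((n.choose α * q.choose α * α.factorial : ℕ) : K)) * ((q - α : ℕ) : K)) •
            (w ^ (α+1) * u ^ (q - (α+1)) * v ^ (n + 1 - (α+1))) := by
      intro α hα
      rw [mem_range] at hα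
      have e1 : n + 1 - α = (n - α) + 1 := by omega
      have e2 : n + 1 - (α + 1) = n - α := by omega
      have e3 : q - (α + 1) = q - α - 1 := by omega
      have hmain : v * (w ^ α * u ^ (q - α) * v ^ (n - α))
          = w ^ α * u ^ (q - α) * v ^ (n + 1 - α)
            - ((q - α : ℕ) : K) • (w ^ (α+1) * u ^ (q - (α+1)) * v ^ (n + 1 - (α+1))) := by
        rw [e1, e2, e3]
        calc v * (w ^ α * u ^ (q - α) * v ^ (n - α))
            = ((v * w ^ α) * u ^ (q - α)) * v ^ (n - α) := by
              simp only [mul_assoc]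
          _ = (w ^ α * (v * u ^ (q - α))) * v ^ (n - α) := by
              rw [(hwv.pow_right α).eq]
              simp only [mul_assoc]
          _ = (w ^ α * (u ^ (q - α) * v - ((q - α : ℕ) : K) • (u ^ (q - α - 1) * w))) * v ^ (n - α) := by
              rw [auxA0 (K := K) u v w h hwu]
          _ = w ^ α * u ^ (q - α) * v ^ (n - α + 1)
              - ((q - α : ℕ) : K) • (w ^ (α + 1) * u ^ (q - α - 1) * v ^ (n - α)) := by
              rw [mul_sub, sub_mul, mul_smul_comm, smul_mul_assoc]
              congr 1
              · simp only [mul_assoc]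
                rw [← pow_succ']
              · congr 1
                simp only [mul_assoc]
                rw [(hwu.pow_left (q - α - 1)).left_comm]
                simp only [← mul_assoc, ← pow_succ]
      rw [hmain, smul_sub, smul_smul]
    calc v ^ (n+1) * u ^ q
        = v * (v ^ n * u ^ q) := by rw [pow_succ', mul_assoc]
      _ = ∑ α ∈ range (n+1), ((-1:K)^α * ((n.choose α * q.choose α * α.factorial : ℕ) : K)) •
            (v * (w ^ α * u ^ (q - α) * v ^ (n - α))) := by
          rw [ih, mul_sum]
          exact sum_congr rfl fun α _ => mul_smul_comm _ _ _
      _ = ∑ α ∈ range (n+1),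
            (((-1:K)^α * ((n.choose α * q.choose α * α.factorial : ℕ) : K)) •
              (w ^ α * u ^ (q - α) * v ^ (n + 1 - α))
            - (((-1:K)^α * ((n.choose α * q.choose α * α.factorial : ℕ) : K)) * ((q - α : ℕ) : K)) •
              (w ^ (α+1) * u ^ (q - (α+1)) * v ^ (n + 1 - (α+1)))) := sum_congr rfl key
      _ = ∑ α ∈ range (n+1), ((-1:K)^α * ((n.choose α * q.choose α * α.factorial : ℕ) : K)) •
              (w ^ α * u ^ (q - α) * v ^ (n + 1 - α))
          - ∑ α ∈ range (n+1), (((-1:K)^α * ((n.choose α * q.choose α * α.factorial : ℕ) : K)) * ((q - α : ℕ) : K)) •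
              (w ^ (α+1) * u ^ (q - (α+1)) * v ^ (n + 1 - (α+1))) := sum_sub_distrib _ _
      _ = ∑ α ∈ range (n+1+1), ((-1:K)^α * (((n+1).choose α * q.choose α * α.factorial : ℕ) : K)) •
            (w ^ α * u ^ (q - α) * v ^ (n + 1 - α)) := by
          have ext1 : ∑ α ∈ range (n+2), ((-1:K)^α * ((n.choose α * q.choose α * α.factorial : ℕ) : K)) •
              (w ^ α * u ^ (q - α) * v ^ (n + 1 - α))
              = ∑ α ∈ range (n+1), ((-1:K)^α * ((n.choose α * q.choose α * α.factorial : ℕ) : K)) •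
              (w ^ α * u ^ (q - α) * v ^ (n + 1 - α)) := by
            rw [sum_range_succ, Nat.choose_succ_self]
            simp
          rw [← ext1, sum_range_succ' _ (n+1), sum_range_succ' _ (n+1)]
          rw [add_sub_right_comm]
          congr 1
          · rw [← sum_sub_distrib]
            refine sum_congr rfl fun α _ => ?_
            rw [← sub_smul, ← scalA]
          · norm_num

lemma lemB_step (X1 X2 X4 X5 : A)
    (h54 : X5 * X4 = X4 * X5 - X2) (h52 : X5 * X2 = X2 * X5 - X1)
    (c12 : Commute X1 X2) (c14 : Commute X1 X4) (c15 : Commute X1 X5)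
    (c24 : Commute X2 X4) (a b c d : ℕ) :
    X5 * (X1 ^ a * X2 ^ b * X4 ^ c * X5 ^ d)
    = X1 ^ a * X2 ^ b * X4 ^ c * X5 ^ (d + 1)
      - (c : K) • (X1 ^ a * X2 ^ (b + 1) * X4 ^ (c - 1) * X5 ^ d)
      - (b : K) • (X1 ^ (a + 1) * X2 ^ (b - 1) * X4 ^ c * X5 ^ d) := by
  simp only [mul_assoc]
  rw [((c15.symm).pow_right a).left_comm]
  rw [auxA0' (K := K) X2 X5 X1 _ h52 c12.symm]
  rw [auxA0' (K := K) X4 X5 X2 _ h54 c24.symm]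
  rw [← pow_succ']
  rw [(c24.symm.pow_left (c-1)).left_comm]
  rw [(c12.symm.pow_left (b-1)).left_comm]
  simp only [mul_sub, mul_smul_comm]
  congr 1
  · congr 2
    rw [← mul_assoc (X2 ^ b), ← pow_succ]
  · congr 1
    rw [← mul_assoc, ← pow_succ]

lemma lemB (X1 X2 X4 X5 : A)
    (h54 : X5 * X4 = X4 * X5 - X2) (h52 : X5 * X2 = X2 * X5 - X1)
    (c12 : Commute X1 X2) (c14 : Commute X1 X4) (c15 : Commute X1 X5)
    (c24 : Commute X2 X4) (s N : ℕ) :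
    X5 ^ N * X4 ^ s = ∑ β1 ∈ range (s+1), ∑ β2 ∈ range (s+1),
      DD K s N β1 β2 • (X1 ^ β2 * X2 ^ β1 * X4 ^ (s - β1 - β2) * X5 ^ (N - β1 - 2*β2)) := by
  induction N with
  | zero =>
    rw [pow_zero, one_mul]
    symm
    rw [Finset.sum_eq_single_of_mem 0 (mem_range.2 (by omega))
      (fun b _ hb => sum_eq_zero fun β2 _ => by
        rw [DD_zero_right (by omega : (0:ℕ) < b + 2*β2)]; simp)]
    rw [Finset.sum_eq_single_of_mem 0 (mem_range.2 (by omega))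
      (fun b _ hb => by rw [DD_zero_right (by omega : (0:ℕ) < 0 + 2*b)]; simp)]
    have h1 : DD K s 0 0 0 = 1 := by simp [DD]
    rw [h1]
    simp
  | succ N ih =>
    have hstep : ∀ β1 β2 : ℕ,
        X5 * (DD K s N β1 β2 • (X1^β2 * X2^β1 * X4^(s-β1-β2) * X5^(N-β1-2*β2)))
        = DD K s N β1 β2 • (X1^β2 * X2^β1 * X4^(s-β1-β2) * X5^(N+1-β1-2*β2))
          - (DD K s N β1 β2 * ((s-β1-β2 : ℕ):K)) • (X1^β2 * X2^(β1+1) * X4^(s-β1-β2-1) * X5^(N-β1-2*β2))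
          - (DD K s N β1 β2 * ((β1 : ℕ):K)) • (X1^(β2+1) * X2^(β1-1) * X4^(s-β1-β2) * X5^(N-β1-2*β2)) := by
      intro β1 β2
      by_cases hg : β1 + 2*β2 ≤ N
      · rw [mul_smul_comm,
          lemB_step (K:=K) X1 X2 X4 X5 h54 h52 c12 c14 c15 c24 β2 β1 (s-β1-β2) (N-β1-2*β2),
          show N - β1 - 2*β2 + 1 = N + 1 - β1 - 2*β2 from by omega,
          smul_sub, smul_sub, smul_smul, smul_smul]
      · rw [DD_zero_right (by omega : N < β1 + 2*β2)]
        simp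
    have hPascal : ∀ β1 ∈ range (s+1), ∀ β2 ∈ range (s+1),
        DD K s (N+1) β1 β2 • (X1^β2 * X2^β1 * X4^(s-β1-β2) * X5^(N+1-β1-2*β2))
        = DD K s N β1 β2 • (X1^β2 * X2^β1 * X4^(s-β1-β2) * X5^(N+1-β1-2*β2))
          - (if β1 = 0 then 0 else
              (DD K s N (β1-1) β2 * ((s-(β1-1)-β2 : ℕ):K)) •
                (X1^β2 * X2^((β1-1)+1) * X4^(s-(β1-1)-β2-1) * X5^(N-(β1-1)-2*β2)))
          - (if β2 = 0 then 0 else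
              (DD K s N (β1+1) (β2-1) * ((β1+1 : ℕ):K)) •
                (X1^((β2-1)+1) * X2^((β1+1)-1) * X4^(s-(β1+1)-(β2-1)) * X5^(N-(β1+1)-2*(β2-1)))) := by
      intro β1 _ β2 _
      match β1, β2 with
      | 0, 0 =>
        rw [if_pos rfl, if_pos rfl, sub_zero, sub_zero, R4]
      | b+1, 0 =>
        rw [if_neg (show ¬(b+1 = 0) from by omega), if_pos rfl, sub_zero]
        simp only [Nat.add_sub_cancel]
        rw [show s-b-0-1 = s-(b+1)-0 from by omega,
          show N-b-2*0 = N+1-(b+1)-2*0 from by omega,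
          R3 s N b, sub_smul]
      | 0, c+1 =>
        rw [if_pos rfl, sub_zero, if_neg (show ¬(c+1 = 0) from by omega)]
        simp only [Nat.add_sub_cancel]
        rw [show s-(0+1)-c = s-0-(c+1) from by omega,
          show N-(0+1)-2*c = N+1-0-2*(c+1) from by omega,
          R2 s N c, sub_smul]
      | b+1, c+1 =>
        rw [if_neg (show ¬(b+1 = 0) from by omega), if_neg (show ¬(c+1 = 0) from by omega)]
        simp only [Nat.add_sub_cancel]
        rw [show s-b-(c+1)-1 = s-(b+1)-(c+1) from by omega,
          show N-b-2*(c+1) = N+1-(b+1)-2*(c+1) from by omega,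
          show s-(b+1+1)-c = s-(b+1)-(c+1) from by omega,
          show N-(b+1+1)-2*c = N+1-(b+1)-2*(c+1) from by omega,
          show (b+1+1 : ℕ) = b+2 from by omega,
          R1 s N b c, sub_smul, sub_smul]
    calc X5 ^ (N+1) * X4 ^ s
        = X5 * (X5 ^ N * X4 ^ s) := by rw [pow_succ', mul_assoc]
      _ = ∑ β1 ∈ range (s+1), ∑ β2 ∈ range (s+1),
            X5 * (DD K s N β1 β2 • (X1^β2 * X2^β1 * X4^(s-β1-β2) * X5^(N-β1-2*β2))) := by
          rw [ih, mul_sum]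
          exact sum_congr rfl fun β1 _ => mul_sum _ _ _
      _ = ∑ β1 ∈ range (s+1), ∑ β2 ∈ range (s+1),
            (DD K s N β1 β2 • (X1^β2 * X2^β1 * X4^(s-β1-β2) * X5^(N+1-β1-2*β2))
              - (DD K s N β1 β2 * ((s-β1-β2 : ℕ):K)) • (X1^β2 * X2^(β1+1) * X4^(s-β1-β2-1) * X5^(N-β1-2*β2))
              - (DD K s N β1 β2 * ((β1 : ℕ):K)) • (X1^(β2+1) * X2^(β1-1) * X4^(s-β1-β2) * X5^(N-β1-2*β2))) :=
          sum_congr rfl fun β1 _ => sum_congr rfl fun β2 _ => hstep β1 β2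
      _ = ∑ β1 ∈ range (s+1), ∑ β2 ∈ range (s+1),
            DD K s (N+1) β1 β2 • (X1^β2 * X2^β1 * X4^(s-β1-β2) * X5^(N+1-β1-2*β2)) := by
          refine (double_shift s _
            (fun β1 β2 => DD K s N β1 β2 • (X1^β2 * X2^β1 * X4^(s-β1-β2) * X5^(N+1-β1-2*β2)))
            (fun β1 β2 => (DD K s N β1 β2 * ((s-β1-β2 : ℕ):K)) • (X1^β2 * X2^(β1+1) * X4^(s-β1-β2-1) * X5^(N-β1-2*β2)))
            (fun β1 β2 => (DD K s N β1 β2 * ((β1 : ℕ):K)) • (X1^(β2+1) * X2^(β1-1) * X4^(s-β1-β2) * X5^(N-β1-2*β2)))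
            hPascal ?_ ?_ ?_ ?_).symm
          · intro β2
            simp [show s - s - β2 = 0 from by omega]
          · intro β2; simp
          · intro β2
            simp [DD_zero_left (show s < (s+1) + β2 from by omega)]
          · intro β1
            rcases Nat.eq_zero_or_pos β1 with h | h
            · subst h; simp
            · simp [DD_zero_left (show s < β1 + s from by omega)]

end Abstract

end PaperAux

set_option maxHeartbeats 4000000 in
theorem stmt_14 {K : Type*} [Field K] [CharZero K]
    {L : Type*} [LieRing L] [LieAlgebra K L]
    (x1 x2 x3 x4 x5 : L)
    (h43 : ⁅x4, x3⁆ = -x1) (h52 : ⁅x5, x2⁆ = -x1) (h54 : ⁅x5, x4⁆ = -x2)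
    (h12 : ⁅x1, x2⁆ = 0) (h13 : ⁅x1, x3⁆ = 0) (h14 : ⁅x1, x4⁆ = 0) (h15 : ⁅x1, x5⁆ = 0)
    (h23 : ⁅x2, x3⁆ = 0) (h24 : ⁅x2, x4⁆ = 0) (h35 : ⁅x3, x5⁆ = 0)
    (j k l m n p q r s t : ℕ) :
    ((ι K x1 : UniversalEnvelopingAlgebra K L) ^ (j) * (ι K x2 : UniversalEnvelopingAlgebra K L) ^ (k) * (ι K x3 : UniversalEnvelopingAlgebra K L) ^ (l) * (ι K x4 : UniversalEnvelopingAlgebra K L) ^ (m) * (ι K x5 : UniversalEnvelopingAlgebra K L) ^ (n))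
      * ((ι K x1 : UniversalEnvelopingAlgebra K L) ^ (p) * (ι K x2 : UniversalEnvelopingAlgebra K L) ^ (q) * (ι K x3 : UniversalEnvelopingAlgebra K L) ^ (r) * (ι K x4 : UniversalEnvelopingAlgebra K L) ^ (s) * (ι K x5 : UniversalEnvelopingAlgebra K L) ^ (t)) =
      ∑ α ∈ Finset.range (min n q + 1),
      ∑ β1 ∈ Finset.range (s + 1), ∑ β2 ∈ Finset.range (s + 1),
        if β1 + β2 ≤ s ∧ β1 + 2 * β2 ≤ n - α then
          ∑ γ ∈ Finset.range (min m r + 1),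
            ((-1 : K) ^ (α + β1 + γ) *
              ((n.choose α * q.choose α * s.choose (β1 + β2) * (n - α).choose (β1 + 2 * β2)
                * (β1 + β2).choose β1 * m.choose γ * r.choose γ
                * α.factorial * (β1 + 2 * β2).factorial * γ.factorial : ℕ) : K)
              / 2 ^ β2) •
              ((ι K x1 : UniversalEnvelopingAlgebra K L) ^ (j + p + α + β2 + γ) * (ι K x2 : UniversalEnvelopingAlgebra K L) ^ (k + q - α + β1)
                * (ι K x3 : UniversalEnvelopingAlgebra K L) ^ (l + r - γ) * (ι K x4 : UniversalEnvelopingAlgebra K L) ^ (m + s - γ - β1 - β2)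
                * (ι K x5 : UniversalEnvelopingAlgebra K L) ^ (n + t - α - β1 - 2 * β2))
        else 0 := by
  set U := UniversalEnvelopingAlgebra K L
  set X1 : U := ι K x1 with hX1
  set X2 : U := ι K x2 with hX2
  set X3 : U := ι K x3 with hX3
  set X4 : U := ι K x4 with hX4
  set X5 : U := ι K x5 with hX5
  have bket : ∀ x y : L, (ι K x : U) * ι K y = ι K y * ι K x + ι K ⁅x, y⁆ := by
    intro x y
    letI : LieRing U := LieRing.ofAssociativeRing
    have h := (ι K (L := L)).map_lie x y
    rw [Ring.lie_def] at h
    exact (sub_eq_iff_eq_add'.mp h.symm)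
  have c12 : Commute X1 X2 := by
    have := bket x1 x2; rw [h12, map_zero, add_zero] at this; exact this
  have c13 : Commute X1 X3 := by
    have := bket x1 x3; rw [h13, map_zero, add_zero] at this; exact this
  have c14 : Commute X1 X4 := by
    have := bket x1 x4; rw [h14, map_zero, add_zero] at this; exact this
  have c15 : Commute X1 X5 := by
    have := bket x1 x5; rw [h15, map_zero, add_zero] at this; exact this
  have c23 : Commute X2 X3 := by
    have := bket x2 x3; rw [h23, map_zero, add_zero] at this; exact this
  have c24 : Commute X2 X4 := by
    have := bket x2 x4; rw [h24, map_zero, add_zero] at this; exact this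
  have c35 : Commute X3 X5 := by
    have := bket x3 x5; rw [h35, map_zero, add_zero] at this; exact this
  have r54 : X5 * X4 = X4 * X5 - X2 := by
    have := bket x5 x4; rw [h54, map_neg, ← sub_eq_add_neg] at this; exact this
  have r52 : X5 * X2 = X2 * X5 - X1 := by
    have := bket x5 x2; rw [h52, map_neg, ← sub_eq_add_neg] at this; exact this
  have r43 : X4 * X3 = X3 * X4 - X1 := by
    have := bket x4 x3; rw [h43, map_neg, ← sub_eq_add_neg] at this; exact this
  -- swap rules
  have sw21 : ∀ a b (z : U), X2^a * (X1^b * z) = X1^b * (X2^a * z) :=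
    fun a b z => ((c12.symm).pow_pow a b).left_comm z
  have sw31 : ∀ a b (z : U), X3^a * (X1^b * z) = X1^b * (X3^a * z) :=
    fun a b z => ((c13.symm).pow_pow a b).left_comm z
  have sw41 : ∀ a b (z : U), X4^a * (X1^b * z) = X1^b * (X4^a * z) :=
    fun a b z => ((c14.symm).pow_pow a b).left_comm z
  have sw51 : ∀ a b (z : U), X5^a * (X1^b * z) = X1^b * (X5^a * z) :=
    fun a b z => ((c15.symm).pow_pow a b).left_comm z
  have sw32 : ∀ a b (z : U), X3^a * (X2^b * z) = X2^b * (X3^a * z) :=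
    fun a b z => ((c23.symm).pow_pow a b).left_comm z
  have sw42 : ∀ a b (z : U), X4^a * (X2^b * z) = X2^b * (X4^a * z) :=
    fun a b z => ((c24.symm).pow_pow a b).left_comm z
  have sw53 : ∀ a b (z : U), X5^a * (X3^b * z) = X3^b * (X5^a * z) :=
    fun a b z => ((c35.symm).pow_pow a b).left_comm z
  have sw21' : ∀ a b, X2^a * X1^b = X1^b * X2^a := fun a b => ((c12.symm).pow_pow a b).eq
  have sw31' : ∀ a b, X3^a * X1^b = X1^b * X3^a := fun a b => ((c13.symm).pow_pow a b).eq
  have sw41' : ∀ a b, X4^a * X1^b = X1^b * X4^a := fun a b => ((c14.symm).pow_pow a b).eq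
  have sw51' : ∀ a b, X5^a * X1^b = X1^b * X5^a := fun a b => ((c15.symm).pow_pow a b).eq
  have sw32' : ∀ a b, X3^a * X2^b = X2^b * X3^a := fun a b => ((c23.symm).pow_pow a b).eq
  have sw42' : ∀ a b, X4^a * X2^b = X2^b * X4^a := fun a b => ((c24.symm).pow_pow a b).eq
  have sw53' : ∀ a b, X5^a * X3^b = X3^b * X5^a := fun a b => ((c35.symm).pow_pow a b).eq
  -- merge rules
  have mg : ∀ (x : U) a b (z : U), x^a * (x^b * z) = x^(a+b) * z := by
    intro x a b z; rw [← mul_assoc, ← pow_add]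
  have mg' : ∀ (x : U) a b, x^a * x^b = x^(a+b) := fun x a b => (pow_add x a b).symm
  -- expansion rules
  have e1' : ∀ M (z : U), X5^M * (X2^q * z) = ∑ α ∈ range (M+1),
      ((-1:K)^α * ((M.choose α * q.choose α * α.factorial : ℕ) : K)) •
      (X1^α * (X2^(q-α) * (X5^(M-α) * z))) := by
    intro M z
    rw [← mul_assoc, lemA (K := K) X2 X5 X1 r52 c12.symm c15.symm q M, sum_mul]
    exact sum_congr rfl fun α _ => by rw [smul_mul_assoc]; simp only [mul_assoc]
  have e2' : ∀ M (z : U), X4^M * (X3^r * z) = ∑ γ ∈ range (M+1),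
      ((-1:K)^γ * ((M.choose γ * r.choose γ * γ.factorial : ℕ) : K)) •
      (X1^γ * (X3^(r-γ) * (X4^(M-γ) * z))) := by
    intro M z
    rw [← mul_assoc, lemA (K := K) X3 X4 X1 r43 c13.symm c14.symm r M, sum_mul]
    exact sum_congr rfl fun γ _ => by rw [smul_mul_assoc]; simp only [mul_assoc]
  have e3' : ∀ M (z : U), X5^M * (X4^s * z) = ∑ β1 ∈ range (s+1), ∑ β2 ∈ range (s+1),
      DD K s M β1 β2 • (X1^β2 * (X2^β1 * (X4^(s-β1-β2) * (X5^(M-β1-2*β2) * z)))) := by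
    intro M z
    rw [← mul_assoc, lemB (K := K) X1 X2 X4 X5 r54 r52 c12 c14 c15 c24 s M, sum_mul]
    refine sum_congr rfl fun β1 _ => ?_
    rw [sum_mul]
    exact sum_congr rfl fun β2 _ => by rw [smul_mul_assoc]; simp only [mul_assoc]
  have main : (X1 ^ j * X2 ^ k * X3 ^ l * X4 ^ m * X5 ^ n)
      * (X1 ^ p * X2 ^ q * X3 ^ r * X4 ^ s * X5 ^ t)
      = ∑ α ∈ range (n + 1), ∑ β1 ∈ range (s + 1), ∑ β2 ∈ range (s + 1), ∑ γ ∈ range (m + 1),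
          ((-1:K) ^ α * ↑(n.choose α * q.choose α * α.factorial) * DD K s (n - α) β1 β2 *
              ((-1:K) ^ γ * ↑(m.choose γ * r.choose γ * γ.factorial))) •
            (X1 ^ (j + (p + (α + β2) + γ)) *
              (X2 ^ (k + (q - α + β1)) *
                (X3 ^ (l + (r - γ)) *
                  (X4 ^ (m - γ + (s - β1 - β2)) * X5 ^ (n - α - β1 - 2 * β2 + t))))) := by
    have mul_sum' : ∀ (a : U) (g : ℕ → U) (S : Finset ℕ), a * ∑ i ∈ S, g i = ∑ i ∈ S, a * g i :=
      fun a g S => Finset.mul_sum S g a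
    simp only [mul_assoc]
    simp only [sw21, sw31, sw41, sw51, sw32, sw42, sw53, sw21', sw31', sw41', sw51', sw32',
      sw42', sw53', mg, mg', e1', e2', e3', mul_sum', Finset.sum_mul, Finset.smul_sum,
      smul_mul_assoc, mul_smul_comm, smul_smul]
    refine Finset.sum_congr rfl fun α _ => Finset.sum_congr rfl fun β1 _ =>
      Finset.sum_congr rfl fun β2 _ => Finset.sum_congr rfl fun γ _ => ?_
    congr 1
    push_cast
    ring
  rw [main]
  refine Eq.trans (Finset.sum_congr rfl fun α hα => ?_)
    (Finset.sum_subset (Finset.range_subset_range.mpr (by omega)) fun α hα hout => ?_).symm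
  · -- per α ≤ n : match inner sums
    rw [mem_range] at hα
    refine Finset.sum_congr rfl fun β1 hβ1 => Finset.sum_congr rfl fun β2 hβ2 => ?_
    rw [mem_range] at hβ1 hβ2
    by_cases hcond : β1 + β2 ≤ s ∧ β1 + 2 * β2 ≤ n - α
    · rw [if_pos hcond]
      obtain ⟨hc1, hc2⟩ := hcond
      refine Eq.trans (Finset.sum_congr rfl fun γ hγ => ?_)
        (Finset.sum_subset (Finset.range_subset_range.mpr (by omega)) fun γ hγ hout => ?_).symm
      · rw [mem_range] at hγ
        by_cases hq : α ≤ q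
        · by_cases hr : γ ≤ r
          · rw [show k + q - α + β1 = k + (q - α + β1) from by omega,
              show l + r - γ = l + (r - γ) from by omega,
              show j + p + α + β2 + γ = j + (p + (α + β2) + γ) from by omega,
              show m + s - γ - β1 - β2 = m - γ + (s - β1 - β2) from by omega,
              show n + t - α - β1 - 2 * β2 = n - α - β1 - 2 * β2 + t from by omega]
            simp only [mul_assoc]
            congr 1
            simp only [DD]
            push_cast
            ring
          · have hz : r.choose γ = 0 := Nat.choose_eq_zero_of_lt (by omega)
            simp [hz]
        · have hz : q.choose α = 0 := Nat.choose_eq_zero_of_lt (by omega)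
          simp [hz]
      · rw [mem_range] at hγ
        rw [mem_range, not_lt] at hout
        have hz : r.choose γ = 0 := Nat.choose_eq_zero_of_lt (by omega)
        simp [hz]
    · rw [if_neg hcond]
      apply Finset.sum_eq_zero
      intro γ _
      have hz : DD K s (n - α) β1 β2 = 0 := by
        rcases not_and_or.mp hcond with h | h
        · exact DD_zero_left (by omega)
        · exact DD_zero_right (by omega)
      simp [hz]
  · rw [mem_range] at hα
    rw [mem_range, not_lt] at hout
    have hz : q.choose α = 0 := Nat.choose_eq_zero_of_lt (by omega)
    simp [hz]
end
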